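/- arXiv:1405.3375 — 2 statements merged into one kernel-verified Lean document; each statement's English description precedes it below -/
import Mathlib

section
/- If in an exact sequence 0 → L → M → N → 0 any two of L, M, N have finite Gorenstein weak injective dimension, then so does the third. -/
open CategoryTheory

universe u

noncomputable section

variable (R : Type u) [Ring R]

/-- Vanishing of `Ext^n_R(N, M)` for left `R`-modules, expressed via the `Ext` bifunctor
on the `ℤ`-linear abelian category `ModuleCat R`. -/
def ExtVanish (n : ℕ) (N M : ModuleCat.{u} R) : Prop :=
  Subsingleton (((_root_.Ext ℤ (ModuleCat.{u} R) n).obj (Opposite.op N)).obj M)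

/-- An `R`-module is super finitely presented if it admits a resolution by
finitely generated projective modules. -/
def SuperFinitelyPresented (N : ModuleCat.{u} R) : Prop :=
  ∃ (F : ℕ → ModuleCat.{u} R) (d : ∀ n, F (n + 1) →ₗ[R] F n) (ε : F 0 →ₗ[R] N),
    (∀ n, Module.Finite R (F n)) ∧ (∀ n, Module.Projective R (F n)) ∧
    Function.Surjective ε ∧ Function.Exact (d 0) ε ∧
    (∀ n, Function.Exact (d (n + 1)) (d n))

/-- An `R`-module `W` is weak injective if `Ext^1_R(N, W) = 0` for every super finitely
presented module `N`. -/
def WeakInjective (W : ModuleCat.{u} R) : Prop :=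
  ∀ N : ModuleCat.{u} R, SuperFinitelyPresented R N → ExtVanish R 1 N W

/-- `wid_R M ≤ n` : `Ext^{n+1}_R(N, M) = 0` for every super finitely presented `N`. -/
def WidLE (M : ModuleCat.{u} R) (n : ℕ) : Prop :=
  ∀ N : ModuleCat.{u} R, SuperFinitelyPresented R N → ExtVanish R (n + 1) N M

/-- The weak injective dimension, as an element of `ℕ∞`. -/
def Wid (M : ModuleCat.{u} R) : ℕ∞ :=
  sInf {c : ℕ∞ | ∃ n : ℕ, c = n ∧ WidLE R M n}

/-- A doubly infinite exact complex of injective modules which stays exact after applying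
`Hom_R(W, -)` for every module `W` in the test class `𝒯`. -/
def IsTotallyAcyclicInjComplex (𝒯 : ModuleCat.{u} R → Prop)
    (I : ℤ → ModuleCat.{u} R) (d : ∀ n : ℤ, I n →ₗ[R] I (n + 1)) : Prop :=
  (∀ n, Module.Injective R (I n)) ∧
  (∀ n, Function.Exact (d n) (d (n + 1))) ∧
  (∀ W : ModuleCat.{u} R, 𝒯 W → ∀ n,
    Function.Exact (fun g : W →ₗ[R] I n => (d n).comp g)
      (fun g : W →ₗ[R] I (n + 1) => (d (n + 1)).comp g))

/-- `M` is Gorenstein injective relative to the test class `𝒯` : `M` is the cokernel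
`Coker (I_1 → I_0)` of a `Hom(𝒯, -)`-exact exact complex of injective modules. -/
def GorensteinRelInjective (𝒯 : ModuleCat.{u} R → Prop) (M : ModuleCat.{u} R) : Prop :=
  ∃ (I : ℤ → ModuleCat.{u} R) (d : ∀ n : ℤ, I n →ₗ[R] I (n + 1)) (π : I 0 →ₗ[R] M),
    IsTotallyAcyclicInjComplex R 𝒯 I d ∧
    Function.Surjective π ∧ Function.Exact (d (-1)) π

/-- Gorenstein weak injective modules: the test class is that of weak injective modules. -/
def GorensteinWeakInjective (M : ModuleCat.{u} R) : Prop :=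
  GorensteinRelInjective R (WeakInjective R) M

/-- Gorenstein injective modules: the test class is that of injective modules. -/
def GorensteinInjective (M : ModuleCat.{u} R) : Prop :=
  GorensteinRelInjective R (fun E => Module.Injective R E) M

/-- The data of an exact sequence `0 → M → G^0 → ⋯ → G^n → 0` (the modules `G^i` for
`i > n` being trivial). -/
def IsFiniteCoresolution (M : ModuleCat.{u} R) (n : ℕ) (G : ℕ → ModuleCat.{u} R)
    (d : ∀ i, G i →ₗ[R] G (i + 1)) (ε : M →ₗ[R] G 0) : Prop :=
  Function.Injective ε ∧ Function.Exact ε (d 0) ∧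
  (∀ i, Function.Exact (d i) (d (i + 1))) ∧
  (∀ i, n < i → ∀ x : G i, x = 0)

/-- `Gwid_R M ≤ n` : `M` has a coresolution of length `n` by Gorenstein weak injective
modules. -/
def GwidLE (M : ModuleCat.{u} R) (n : ℕ) : Prop :=
  ∃ (G : ℕ → ModuleCat.{u} R) (d : ∀ i, G i →ₗ[R] G (i + 1)) (ε : M →ₗ[R] G 0),
    IsFiniteCoresolution R M n G d ε ∧ ∀ i, GorensteinWeakInjective R (G i)

/-- The Gorenstein weak injective dimension, as an element of `ℕ∞`. -/
def Gwid (M : ModuleCat.{u} R) : ℕ∞ :=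
  sInf {c : ℕ∞ | ∃ n : ℕ, c = n ∧ GwidLE R M n}

/-- `Gid_R M ≤ n`, via coresolutions by Gorenstein injective modules. -/
def GidLE (M : ModuleCat.{u} R) (n : ℕ) : Prop :=
  ∃ (G : ℕ → ModuleCat.{u} R) (d : ∀ i, G i →ₗ[R] G (i + 1)) (ε : M →ₗ[R] G 0),
    IsFiniteCoresolution R M n G d ε ∧ ∀ i, GorensteinInjective R (G i)

/-- The Gorenstein injective dimension, as an element of `ℕ∞`. -/
def Gid (M : ModuleCat.{u} R) : ℕ∞ :=
  sInf {c : ℕ∞ | ∃ n : ℕ, c = n ∧ GidLE R M n}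

/-- `id_R M ≤ n`, via coresolutions by injective modules. -/
def IdLE (M : ModuleCat.{u} R) (n : ℕ) : Prop :=
  ∃ (G : ℕ → ModuleCat.{u} R) (d : ∀ i, G i →ₗ[R] G (i + 1)) (ε : M →ₗ[R] G 0),
    IsFiniteCoresolution R M n G d ε ∧ ∀ i, Module.Injective R (G i)

/-- The injective dimension, as an element of `ℕ∞`. -/
def Idim (M : ModuleCat.{u} R) : ℕ∞ :=
  sInf {c : ℕ∞ | ∃ n : ℕ, c = n ∧ IdLE R M n}

/-- The data of an exact sequence `0 → P_n → ⋯ → P_0 → M → 0`. -/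
def IsFiniteResolution (M : ModuleCat.{u} R) (n : ℕ) (P : ℕ → ModuleCat.{u} R)
    (d : ∀ i, P (i + 1) →ₗ[R] P i) (ε : P 0 →ₗ[R] M) : Prop :=
  Function.Surjective ε ∧ Function.Exact (d 0) ε ∧
  (∀ i, Function.Exact (d (i + 1)) (d i)) ∧
  (∀ i, n < i → ∀ x : P i, x = 0)

/-- `pd_R M ≤ n`, via resolutions by projective modules. -/
def PdLE (M : ModuleCat.{u} R) (n : ℕ) : Prop :=
  ∃ (P : ℕ → ModuleCat.{u} R) (d : ∀ i, P (i + 1) →ₗ[R] P i) (ε : P 0 →ₗ[R] M),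
    IsFiniteResolution R M n P d ε ∧ ∀ i, Module.Projective R (P i)

end

variable (R : Type u) [Ring R]

/-- A short exact sequence `0 → L → M → N → 0` of `R`-modules. -/
def ShortExactSeq (L M N : ModuleCat.{u} R) (f : L →ₗ[R] M) (g : M →ₗ[R] N) : Prop :=
  Function.Injective f ∧ Function.Surjective g ∧ Function.Exact f g

/-- Exactness of `0 → Hom(C, X) → Hom(B, X) → Hom(A, X) → 0` induced by
`0 → A → B → C → 0`. -/
def HomContraExact (X : ModuleCat.{u} R) {A B C : ModuleCat.{u} R}
    (f : A →ₗ[R] B) (g : B →ₗ[R] C) : Prop :=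
  Function.Injective (fun h : C →ₗ[R] X => h.comp g) ∧
  Function.Exact (fun h : C →ₗ[R] X => h.comp g) (fun h : B →ₗ[R] X => h.comp f) ∧
  Function.Surjective (fun h : B →ₗ[R] X => h.comp f)

/-- A short exact sequence is `GWI`-copure exact if `Hom_R(-, X)` leaves it exact for
every Gorenstein weak injective module `X`. -/
def GWICopureExact {A B C : ModuleCat.{u} R} (f : A →ₗ[R] B) (g : B →ₗ[R] C) : Prop :=
  ShortExactSeq R A B C f g ∧
  ∀ X : ModuleCat.{u} R, GorensteinWeakInjective R X → HomContraExact R X f g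

/-- `M` is `GWI`-copure injective if `Hom_R(-, M)` is exact on every `GWI`-copure exact
sequence. -/
def GWICopureInjectiveMod (M : ModuleCat.{u} R) : Prop :=
  ∀ (A B C : ModuleCat.{u} R) (f : A →ₗ[R] B) (g : B →ₗ[R] C),
    GWICopureExact R f g → HomContraExact R M f g

/-- `φ : M → G` is a Gorenstein weak injective preenvelope of `M`. -/
def GWIPreenvelope (M G : ModuleCat.{u} R) (φ : M →ₗ[R] G) : Prop :=
  GorensteinWeakInjective R G ∧
  ∀ G' : ModuleCat.{u} R, GorensteinWeakInjective R G' →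
    ∀ f : M →ₗ[R] G', ∃ g : G →ₗ[R] G', g.comp φ = f

/-- A `WI`-pure Tate injective resolution of `M` : an injective resolution
`0 → M → E^0 → E^1 → ⋯`, a `WI`-pure exact complex `T` of injectives, and a chain map
`u : E → T` which is an isomorphism in all sufficiently large degrees. -/
def WIPureTateInjectiveResolution (M : ModuleCat.{u} R)
    (E : ℕ → ModuleCat.{u} R) (dE : ∀ n, E n →ₗ[R] E (n + 1)) (ε : M →ₗ[R] E 0)
    (T : ℤ → ModuleCat.{u} R) (dT : ∀ n : ℤ, T n →ₗ[R] T (n + 1))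
    (u : ∀ n : ℕ, E n →ₗ[R] T n) : Prop :=
  (∀ n, Module.Injective R (E n)) ∧ Function.Injective ε ∧
  Function.Exact ε (dE 0) ∧ (∀ n, Function.Exact (dE n) (dE (n + 1))) ∧
  IsTotallyAcyclicInjComplex R (WeakInjective R) T dT ∧
  (∀ n : ℕ, (dT n).comp (u n) = (u (n + 1)).comp (dE n)) ∧
  ∃ N : ℕ, ∀ n, N ≤ n → Function.Bijective (u n)

/-- Vanishing of the relative Tate cohomology `Êxt^i_GWI(N, M)` for all `i ∈ ℤ`,
computed from the `WI`-pure exact complex `T` : the complex `Hom_R(N, T)` is exact. -/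
def ExtHatVanishesAll (N : ModuleCat.{u} R) (T : ℤ → ModuleCat.{u} R)
    (dT : ∀ n : ℤ, T n →ₗ[R] T (n + 1)) : Prop :=
  ∀ n : ℤ, Function.Exact (fun g : N →ₗ[R] T n => (dT n).comp g)
    (fun g : N →ₗ[R] T (n + 1) => (dT (n + 1)).comp g)

namespace GWHelp

open LinearMap CategoryTheory.Limits

variable {R : Type u} [Ring R]

section plain

variable {M N P : Type u} [AddCommGroup M] [Module R M] [AddCommGroup N] [Module R N]
  [AddCommGroup P] [Module R P]

/-- Descend a linear map along a surjection containing its kernel. -/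
lemma descend (p : M →ₗ[R] N) (hp : Function.Surjective p) (v : M →ₗ[R] P)
    (h : ∀ x, p x = 0 → v x = 0) : ∃ w : N →ₗ[R] P, ∀ x, w (p x) = v x := by
  have hle : ker p ≤ ker v := fun x hx => h x hx
  refine ⟨((ker p).liftQ v hle).comp (p.quotKerEquivOfSurjective hp).symm.toLinearMap,
    fun x => ?_⟩
  have hmk : (p.quotKerEquivOfSurjective hp).symm (p x) = Submodule.Quotient.mk x := by
    rw [LinearEquiv.symm_apply_eq]
    rfl
  simp only [LinearMap.coe_comp, Function.comp_apply, LinearEquiv.coe_toLinearMap, hmk]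
  exact Submodule.liftQ_apply _ _ _

/-- Factor a map through an injective map containing its range. -/
lemma factorInj (f : M →ₗ[R] N) (hf : Function.Injective f) (v : P →ₗ[R] N)
    (h : ∀ z, v z ∈ Set.range f) : ∃ w : P →ₗ[R] M, ∀ z, f (w z) = v z := by
  have h' : ∀ z, v z ∈ LinearMap.range f := fun z => h z
  refine ⟨(LinearEquiv.ofInjective f hf).symm.toLinearMap.comp
    (v.codRestrict (LinearMap.range f) h'), fun z => ?_⟩
  have := (LinearEquiv.ofInjective f hf).apply_symm_apply ⟨v z, h' z⟩
  have h2 := congrArg Subtype.val this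
  simpa [LinearEquiv.ofInjective_apply] using h2

lemma sectionOfRetraction (i : M →ₗ[R] N) (p : N →ₗ[R] P) (hp : Function.Surjective p)
    (hker : ∀ y, p y = 0 → y ∈ Set.range i) (hpi : ∀ x, p (i x) = 0)
    (t : N →ₗ[R] M) (ht : ∀ x, t (i x) = x) : ∃ s : P →ₗ[R] N, ∀ z, p (s z) = z := by
  obtain ⟨s, hs⟩ := descend p hp (LinearMap.id - i.comp t) (fun y hy => by
    obtain ⟨x, rfl⟩ := hker y hy
    simp [ht])
  refine ⟨s, fun z => ?_⟩
  obtain ⟨y, rfl⟩ := hp z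
  rw [hs]
  simp [hpi]

lemma injective_prod (hM : Module.Injective R M) (hN : Module.Injective R N) :
    Module.Injective R (M × N) where
  out X Y _ _ _ _ f hf g := by
    obtain ⟨h₁, hh₁⟩ := hM.out f hf ((fst R M N).comp g)
    obtain ⟨h₂, hh₂⟩ := hN.out f hf ((snd R M N).comp g)
    refine ⟨h₁.prod h₂, fun x => ?_⟩
    have : ((h₁.prod h₂) (f x)) = (h₁ (f x), h₂ (f x)) := rfl
    rw [this, hh₁ x, hh₂ x]
    rfl

lemma injective_punit : Module.Injective R PUnit.{u+1} where
  out X Y _ _ _ _ f _ g := ⟨0, fun x => Subsingleton.elim _ _⟩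

end plain

/-- Injective modules are weak injective. -/
lemma weakInjective_of_injective (W : ModuleCat.{u} R) (hW : Module.Injective R W) :
    WeakInjective R W := by
  intro N _
  obtain ⟨P⟩ := (inferInstance : HasProjectiveResolution N).out
  have hiso := P.isoExt (R := ℤ) 1 W
  -- the homology of the Hom-complex vanishes at 1
  have hexact : (P.complex.linearYonedaObj ℤ W).ExactAt 1 := by
    rw [HomologicalComplex.exactAt_iff' _ 0 1 2 (by simp) (by simp)]
    rw [ShortComplex.moduleCat_exact_iff]
    intro (φ : P.complex.X 1 ⟶ W) hφ
    have hφ' : ∀ x : P.complex.X 2, φ (P.complex.d 2 1 x) = 0 := by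
      have hφ2 : P.complex.d 2 1 ≫ φ = 0 := hφ
      intro x
      have := congrArg (fun (ψ : P.complex.X 2 ⟶ W) => ψ x) hφ2
      simpa using this
    -- exactness of the projective resolution at 1
    have hres := (P.exact_succ 0)
    rw [ShortComplex.moduleCat_exact_iff] at hres
    -- φ kills the kernel of d 1 0
    have hker : ∀ x : P.complex.X 1, P.complex.d 1 0 x = 0 → φ x = 0 := by
      intro x hx
      obtain ⟨y, hy⟩ := hres x hx
      rw [← hy]
      exact hφ' y
    -- descend to the range of d 1 0, then extend by injectivity of W
    obtain ⟨μ, hμ⟩ := descend (P.complex.d 1 0).hom.rangeRestrict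
      (P.complex.d 1 0).hom.surjective_rangeRestrict (φ.hom : P.complex.X 1 →ₗ[R] W)
      (fun x hx => hker x (by
        have := congrArg (Subtype.val) hx
        exact this))
    obtain ⟨h, hh⟩ := hW.out (LinearMap.range (P.complex.d 1 0).hom).subtype
      (Submodule.injective_subtype _) μ
    refine ⟨ModuleCat.ofHom h, ?_⟩
    show P.complex.d 1 0 ≫ ModuleCat.ofHom h = φ
    apply ModuleCat.hom_ext
    apply LinearMap.ext
    intro x
    show h (P.complex.d 1 0 x) = φ x
    have h1 : h ((LinearMap.range (P.complex.d 1 0).hom).subtype ((P.complex.d 1 0).hom.rangeRestrict x))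
        = μ ((P.complex.d 1 0).hom.rangeRestrict x) := hh _
    rw [hμ x] at h1
    exact h1
  have hzero : IsZero (((_root_.Ext ℤ (ModuleCat.{u} R) 1).obj (Opposite.op N)).obj W) := by
    refine IsZero.of_iso ?_ hiso
    rw [← HomologicalComplex.exactAt_iff_isZero_homology]
    exact hexact
  have hzeroel : ∀ x : (((_root_.Ext ℤ (ModuleCat.{u} R) 1).obj (Opposite.op N)).obj W), x = 0 := by
    intro x
    have hid : (𝟙 (((_root_.Ext ℤ (ModuleCat.{u} R) 1).obj (Opposite.op N)).obj W)) =
        (0 : _ ⟶ _) := hzero.eq_of_src _ _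
    calc x = (𝟙 (((_root_.Ext ℤ (ModuleCat.{u} R) 1).obj (Opposite.op N)).obj W)) x := rfl
      _ = 0 := by rw [hid]; rfl
  exact ⟨fun a b => by rw [hzeroel a, hzeroel b]⟩

/-- Transport of Gorenstein weak injectivity along a linear equivalence. -/
lemma gwi_of_equiv {X Y : ModuleCat.{u} R} (e : X ≃ₗ[R] Y)
    (h : GorensteinWeakInjective R X) : GorensteinWeakInjective R Y := by
  obtain ⟨I, d, π, hT, hsurj, hexd⟩ := h
  refine ⟨I, d, e.toLinearMap.comp π, hT, fun y => ?_, fun z => ?_⟩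
  · obtain ⟨x, hx⟩ := hsurj (e.symm y)
    exact ⟨x, by simp [hx]⟩
  · constructor
    · intro hz
      have : π z = 0 := by
        have : e (π z) = 0 := hz
        simpa using congrArg e.symm this
      exact (hexd z).mp this
    · intro hz
      have : π z = 0 := (hexd z).mpr hz
      show e (π z) = 0
      rw [this, map_zero]

/-- Injective modules are Gorenstein weak injective. -/
lemma gwi_of_injective (E : ModuleCat.{u} R) (hE : Module.Injective R E) :
    GorensteinWeakInjective R E := by
  classical
  -- the complex `⋯ → E × E → E × E → ⋯` with differential `(x, y) ↦ (y, 0)`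
  refine ⟨fun _ => ModuleCat.of R (E × E),
    fun _ => (LinearMap.snd R E E).prod 0, LinearMap.snd R E E, ⟨?_, ?_, ?_⟩, ?_, ?_⟩
  · intro n
    exact injective_prod hE hE
  · intro n z
    constructor
    · intro hz
      have h2 : z.2 = 0 := congrArg Prod.fst hz
      refine ⟨(0, z.1), ?_⟩
      show ((z.1 : E), (0 : E)) = z
      exact Prod.ext_iff.mpr ⟨rfl, h2.symm⟩
    · rintro ⟨w, rfl⟩
      show (((0 : E), (0 : E)) : E × E) = 0
      rfl
  · intro W _ n
    intro (g : W →ₗ[R] E × E)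
    constructor
    · intro hg
      refine ⟨(0 : W →ₗ[R] E).prod ((LinearMap.fst R E E).comp g), ?_⟩
      apply LinearMap.ext
      intro w
      have h2 : (g w).2 = 0 := by
        have := congrArg (fun (φ : W →ₗ[R] (E × E)) => (φ w).1) hg
        simpa using this
      show ((g w).1, (0 : E)) = g w
      exact Prod.ext_iff.mpr ⟨rfl, h2.symm⟩
    · rintro ⟨w, rfl⟩
      apply LinearMap.ext
      intro x
      rfl
  · intro y
    exact ⟨(0, y), rfl⟩
  · intro z
    constructor
    · intro hz
      have h2 : z.2 = 0 := hz
      refine ⟨(0, z.1), ?_⟩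
      show ((z.1 : E), (0 : E)) = z
      exact Prod.ext_iff.mpr ⟨rfl, h2.symm⟩
    · rintro ⟨w, rfl⟩
      rfl

/-- Lifting maps from weak injective modules along the canonical surjection of a
totally acyclic complex witnessing Gorenstein weak injectivity. -/
lemma lift_of_witness {I : ℤ → ModuleCat.{u} R} {d : ∀ n : ℤ, I n →ₗ[R] I (n+1)}
    (hex : ∀ n, Function.Exact (d n) (d (n+1)))
    (hhom : ∀ W : ModuleCat.{u} R, WeakInjective R W → ∀ n,
      Function.Exact (fun g : W →ₗ[R] I n => (d n).comp g)
        (fun g : W →ₗ[R] I (n+1) => (d (n+1)).comp g))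
    {G : ModuleCat.{u} R} (π : I 0 →ₗ[R] G) (hπ : Function.Surjective π)
    (hexd : Function.Exact (d (-1)) π) (W : ModuleCat.{u} R) (hW : WeakInjective R W)
    (h : W →ₗ[R] G) : ∃ k : W →ₗ[R] I 0, ∀ w, π (k w) = h w := by
  -- construct the embedding `e : G → I 1`
  obtain ⟨e, he⟩ := descend π hπ (d 0) (fun x hx => by
    obtain ⟨y, rfl⟩ := (hexd x).mp hx
    exact (hex (-1) (d (-1) y)).mpr ⟨y, rfl⟩)
  have heinj : Function.Injective e := by
    intro a b hab
    obtain ⟨x, rfl⟩ := hπ a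
    obtain ⟨y, rfl⟩ := hπ b
    rw [he, he] at hab
    have : d 0 (x - y) = 0 := by rw [map_sub, hab, sub_self]
    obtain ⟨z, hz⟩ := (hex (-1) (x - y)).mp this
    have : π (x - y) = 0 := (hexd (x - y)).mpr ⟨z, hz⟩
    rw [map_sub] at this
    have := sub_eq_zero.mp this
    rw [this]
  -- `d 1 ∘ (e ∘ h) = 0`
  have hd1 : (d (0+1)).comp (e.comp h) = 0 := by
    apply LinearMap.ext
    intro w
    show d (0+1) (e (h w)) = 0
    obtain ⟨x, hx⟩ := hπ (h w)
    rw [← hx, he]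
    exact (hex 0 (d 0 x)).mpr ⟨x, rfl⟩
  obtain ⟨k, hk⟩ := (hhom W hW 0 (e.comp h)).mp hd1
  refine ⟨k, fun w => ?_⟩
  apply heinj
  rw [he (k w)]
  have := congrArg (fun (φ : W →ₗ[R] I (0+1)) => φ w) hk
  simpa using this

/-- Every Gorenstein weak injective module embeds into an injective module with a
Gorenstein weak injective cokernel, along which weak injective modules lift. -/
lemma gwi_emb {G : ModuleCat.{u} R} (hG : GorensteinWeakInjective R G) :
    ∃ (E G' : ModuleCat.{u} R) (e : G →ₗ[R] E) (q : E →ₗ[R] G'),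
      Module.Injective R E ∧ Function.Injective e ∧ Function.Surjective q ∧
      (∀ x, q (e x) = 0) ∧ (∀ y, q y = 0 → y ∈ Set.range e) ∧
      GorensteinWeakInjective R G' ∧
      (∀ W : ModuleCat.{u} R, WeakInjective R W → ∀ h : W →ₗ[R] G',
        ∃ k : W →ₗ[R] E, ∀ w, q (k w) = h w) := by
  obtain ⟨I, d, π, ⟨hinj, hex, hhom⟩, hπ, hexd⟩ := hG
  obtain ⟨e, he⟩ := descend π hπ (d 0) (fun x hx => by
    obtain ⟨y, rfl⟩ := (hexd x).mp hx
    exact (hex (-1) (d (-1) y)).mpr ⟨y, rfl⟩)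
  have heinj : Function.Injective e := by
    intro a b hab
    obtain ⟨x, rfl⟩ := hπ a
    obtain ⟨y, rfl⟩ := hπ b
    rw [he, he] at hab
    have h0 : d 0 (x - y) = 0 := by rw [map_sub, hab, sub_self]
    obtain ⟨z, hz⟩ := (hex (-1) (x - y)).mp h0
    have : π (x - y) = 0 := (hexd (x - y)).mpr ⟨z, hz⟩
    rw [map_sub] at this
    rw [sub_eq_zero.mp this]
  -- the cokernel
  refine ⟨I (0+1), ModuleCat.of R (I (0+1) ⧸ LinearMap.range (d 0)),
    e, (LinearMap.range (d 0)).mkQ, hinj (0+1), heinj, Submodule.mkQ_surjective _,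
    ?_, ?_, ?_, ?_⟩
  · intro x
    obtain ⟨y, rfl⟩ := hπ x
    rw [he]
    exact (Submodule.Quotient.mk_eq_zero _).mpr ⟨y, rfl⟩
  · intro y hy
    obtain ⟨x, hx⟩ := (Submodule.Quotient.mk_eq_zero _).mp hy
    exact ⟨π x, by rw [he, hx]⟩
  · -- the cokernel is Gorenstein weak injective via the shifted complex
    refine ⟨fun n => I (n+1), fun n => d (n+1), (LinearMap.range (d 0)).mkQ,
      ⟨fun n => hinj (n+1), fun n => hex (n+1), fun W hW n => hhom W hW (n+1)⟩,
      Submodule.mkQ_surjective _, fun z => ?_⟩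
    constructor
    · intro hz
      obtain ⟨x, hx⟩ := (Submodule.Quotient.mk_eq_zero _).mp hz
      exact ⟨x, hx⟩
    · rintro ⟨x, rfl⟩
      exact (Submodule.Quotient.mk_eq_zero _).mpr ⟨x, rfl⟩
  · -- lifting property along `mkQ` via the shifted witness
    intro W hW h
    exact lift_of_witness (I := fun n => I (n+1)) (d := fun n => d (n+1))
      (fun n => hex (n+1)) (fun W hW n => hhom W hW (n+1))
      ((LinearMap.range (d 0)).mkQ) (Submodule.mkQ_surjective _)
      (fun z => by
        constructor
        · intro hz
          obtain ⟨x, hx⟩ := (Submodule.Quotient.mk_eq_zero _).mp hz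
          exact ⟨x, hx⟩
        · rintro ⟨x, rfl⟩
          exact (Submodule.Quotient.mk_eq_zero _).mpr ⟨x, rfl⟩) W hW h

/-- Along with the surjection of the witness complex. -/
lemma gwi_lift {G : ModuleCat.{u} R} (hG : GorensteinWeakInjective R G) :
    ∃ (I0 : ModuleCat.{u} R) (π : I0 →ₗ[R] G), Module.Injective R I0 ∧
      Function.Surjective π ∧
      (∀ W : ModuleCat.{u} R, WeakInjective R W → ∀ h : W →ₗ[R] G,
        ∃ k : W →ₗ[R] I0, ∀ w, π (k w) = h w) := by
  obtain ⟨I, d, π, ⟨hinj, hex, hhom⟩, hπ, hexd⟩ := hG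
  exact ⟨I 0, π, hinj 0, hπ, fun W hW h => lift_of_witness hex hhom π hπ hexd W hW h⟩

/-- Short exact sequences `0 → A → P → W → 0` with `A` Gorenstein weak injective and `W`
weak injective admit a retraction. -/
lemma gwi_retraction {A P W : ModuleCat.{u} R} (hA : GorensteinWeakInjective R A)
    (hW : WeakInjective R W) (i : A →ₗ[R] P) (p : P →ₗ[R] W)
    (hi : Function.Injective i) (hp : Function.Surjective p)
    (hpi : ∀ a, p (i a) = 0) (hker : ∀ y, p y = 0 → y ∈ Set.range i) :
    ∃ t : P →ₗ[R] A, ∀ a, t (i a) = a := by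
  obtain ⟨E, G', e, q, hE, he, hq, hqe, hqker, _, hlift⟩ := gwi_emb hA
  obtain ⟨u, hu⟩ := hE.out i hi e
  obtain ⟨hbar, hhbar⟩ := descend p hp (q.comp u) (fun x hx => by
    obtain ⟨a, rfl⟩ := hker x hx
    show q (u (i a)) = 0
    rw [hu a]
    exact hqe a)
  obtain ⟨k, hk⟩ := hlift W hW hbar
  have hv : ∀ x, (u - k.comp p) x ∈ Set.range e := by
    intro x
    apply hqker
    show q (u x - k (p x)) = 0
    rw [map_sub, hk (p x), hhbar x]
    show q (u x) - q (u x) = 0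
    rw [sub_self]
  obtain ⟨t, ht⟩ := factorInj e he (u - k.comp p) hv
  refine ⟨t, fun a => ?_⟩
  apply he
  rw [ht (i a)]
  show u (i a) - k (p (i a)) = e a
  rw [hu a, hpi a, map_zero, sub_zero]

/-- Lifting along a surjection with Gorenstein weak injective kernel. -/
lemma gwi_lift_along {A X B W : ModuleCat.{u} R} (hA : GorensteinWeakInjective R A)
    (hW : WeakInjective R W) (i : A →ₗ[R] X) (p : X →ₗ[R] B)
    (hi : Function.Injective i) (hp : Function.Surjective p)
    (hpi : ∀ a, p (i a) = 0) (hker : ∀ x, p x = 0 → x ∈ Set.range i)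
    (φ : W →ₗ[R] B) : ∃ ψ : W →ₗ[R] X, ∀ w, p (ψ w) = φ w := by
  classical
  -- the pullback
  let K : Submodule R (W × X) := LinearMap.ker (φ.comp (LinearMap.fst R W X)
    - p.comp (LinearMap.snd R W X))
  have hmem : ∀ z : W × X, z ∈ K ↔ φ z.1 = p z.2 := by
    intro z
    show φ z.1 - p z.2 = 0 ↔ _
    exact sub_eq_zero
  let P' : ModuleCat.{u} R := ModuleCat.of R K
  let i' : A →ₗ[R] P' := ((0 : A →ₗ[R] W).prod (i)).codRestrict K (fun a => by
    rw [hmem]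
    show φ 0 = p (i a)
    rw [map_zero, hpi a])
  let p₁ : P' →ₗ[R] W := (LinearMap.fst R W X).comp K.subtype
  have hi' : Function.Injective i' := by
    intro a b hab
    have := congrArg (fun z : K => (z : W × X).2) hab
    exact hi this
  have hp₁ : Function.Surjective p₁ := by
    intro w
    obtain ⟨x, hx⟩ := hp (φ w)
    exact ⟨⟨(w, x), by rw [hmem]; exact hx.symm⟩, rfl⟩
  have hp₁i' : ∀ a, p₁ (i' a) = 0 := fun a => rfl
  have hker₁ : ∀ z, p₁ z = 0 → z ∈ Set.range i' := by
    rintro ⟨⟨w, x⟩, hz⟩ h1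
    have hw : w = 0 := h1
    have : p x = 0 := by
      have := (hmem (w, x)).mp hz
      rw [hw, map_zero] at this
      exact this.symm
    obtain ⟨a, ha⟩ := hker x this
    refine ⟨a, ?_⟩
    apply Subtype.ext
    show ((0 : W), i a) = (w, x)
    rw [hw, ha]
  obtain ⟨t, ht⟩ := gwi_retraction hA hW i' p₁ hi' hp₁ hp₁i' hker₁
  obtain ⟨s, hs⟩ := sectionOfRetraction i' p₁ hp₁ hker₁ hp₁i' t ht
  refine ⟨((LinearMap.snd R W X).comp K.subtype).comp s, fun w => ?_⟩
  have hsw : ∀ w, ((show ↥K from s w) : W × X) ∈ K := fun w => (show ↥K from s w).2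
  show p ((show ↥K from s w) : W × X).2 = φ w
  have hmem' := (hmem ((show ↥K from s w) : W × X)).mp (hsw w)
  rw [← hmem']
  show φ (p₁ (s w)) = φ w
  rw [hs w]

/-- The class of Gorenstein weak injective modules is closed under extensions
(generalized horseshoe lemma). -/
lemma gwi_extension {A X B : ModuleCat.{u} R} (f : A →ₗ[R] X) (g : X →ₗ[R] B)
    (hf : Function.Injective f) (hg : Function.Surjective g)
    (hgf : ∀ a, g (f a) = 0) (hker : ∀ x, g x = 0 → x ∈ Set.range f)
    (hA : GorensteinWeakInjective R A) (hB : GorensteinWeakInjective R B) :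
    GorensteinWeakInjective R X := by
  classical
  obtain ⟨IA, dA, πA, ⟨hinjA, hexA, hhomA⟩, hπA, hexdA⟩ := hA
  obtain ⟨IB, dB, πB, ⟨hinjB, hexB, hhomB⟩, hπB, hexdB⟩ := hB
  -- lift `πB` along `g`
  obtain ⟨s, hs⟩ := gwi_lift_along ⟨IA, dA, πA, ⟨hinjA, hexA, hhomA⟩, hπA, hexdA⟩
    (weakInjective_of_injective _ (hinjB 0)) f g hf hg hgf hker πB
  -- the comparison map `τ` with `f ∘ τ = s ∘ dB (-1)`
  obtain ⟨τ, hτ⟩ := factorInj f hf (s.comp (dB (-1))) (fun b => hker _ (by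
    show g (s (dB (-1) b)) = 0
    rw [hs]
    exact (hexdB (dB (-1) b)).mpr ⟨b, rfl⟩))
  -- the connecting map in degree `-1`
  obtain ⟨l0, hl0⟩ := lift_of_witness hexA hhomA πA hπA hexdA (IB (-1))
    (weakInjective_of_injective _ (hinjB (-1))) (-τ)
  have hINV0 : ∀ y, dB (-1) y = 0 → dA ((-1)+1) (l0 y) = 0 := by
    intro y hy
    have hτy : τ y = 0 := by
      apply hf
      rw [hτ y, map_zero]
      show s (dB (-1) y) = 0
      rw [hy, map_zero]
    have hπ0 : πA (l0 y) = 0 := by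
      rw [hl0 y]
      show -τ y = 0
      rw [hτy, neg_zero]
    obtain ⟨z, hz⟩ := (hexdA (l0 y)).mp hπ0
    rw [← hz]
    exact (hexA (-1) (dA (-1) z)).mpr ⟨z, rfl⟩
  -- one step up
  have stepUp : ∀ (n : ℤ) (l : IB n →ₗ[R] IA (n+1)),
      (∀ y, dB n y = 0 → dA (n+1) (l y) = 0) →
      ∃ l' : IB (n+1) →ₗ[R] IA (n+1+1),
        (∀ y, dB (n+1) y = 0 → dA (n+1+1) (l' y) = 0) ∧
        ∀ b, l' (dB n b) = - dA (n+1) (l b) := by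
    intro n l hl
    obtain ⟨μ, hμ⟩ := descend (dB n).rangeRestrict (dB n).surjective_rangeRestrict
      (-((dA (n+1)).comp l)) (fun x hx => by
        have hx0 : dB n x = 0 := by
          have := congrArg Subtype.val hx
          simpa using this
        show -(dA (n+1) (l x)) = 0
        rw [hl x hx0, neg_zero])
    obtain ⟨l', hl'⟩ := (hinjA (n+1+1)).out (LinearMap.range (dB n)).subtype
      (Submodule.injective_subtype _) μ
    have hre : ∀ b, l' (dB n b) = - dA (n+1) (l b) := by
      intro b
      have h1 := hl' ((dB n).rangeRestrict b)
      rw [hμ b] at h1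
      exact h1
    refine ⟨l', fun y hy => ?_, hre⟩
    obtain ⟨b, rfl⟩ := (hexB n y).mp hy
    rw [hre b, map_neg, neg_eq_zero]
    exact (hexA (n+1) (dA (n+1) (l b))).mpr ⟨l b, rfl⟩
  -- one step down
  have stepDown : ∀ (n : ℤ) (l' : IB (n+1) →ₗ[R] IA (n+1+1)),
      (∀ y, dB (n+1) y = 0 → dA (n+1+1) (l' y) = 0) →
      ∃ l : IB n →ₗ[R] IA (n+1),
        (∀ y, dB n y = 0 → dA (n+1) (l y) = 0) ∧
        ∀ b, dA (n+1) (l b) = - l' (dB n b) := by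
    intro n l' hl'
    have hσ : (fun (gg : IB n →ₗ[R] IA (n+1+1)) => (dA (n+1+1)).comp gg)
        (-(l'.comp (dB n))) = 0 := by
      apply LinearMap.ext
      intro b
      show dA (n+1+1) (-(l' (dB n b))) = 0
      rw [map_neg, neg_eq_zero]
      exact hl' (dB n b) ((hexB n (dB n b)).mpr ⟨b, rfl⟩)
    obtain ⟨l, hl⟩ := (hhomA (IB n) (weakInjective_of_injective _ (hinjB n)) (n+1)
      (-(l'.comp (dB n)))).mp hσ
    have hre : ∀ b, dA (n+1) (l b) = - l' (dB n b) := by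
      intro b
      have := congrArg (fun (φ : IB n →ₗ[R] IA (n+1+1)) => φ b) hl
      simpa using this
    refine ⟨l, fun y hy => ?_, hre⟩
    rw [hre y, hy, map_zero, neg_zero]
  -- the subtype-valued step functions
  let Pk : ∀ n : ℤ, Type u := fun n =>
    {l : IB n →ₗ[R] IA (n+1) // ∀ y, dB n y = 0 → dA (n+1) (l y) = 0}
  let sUp : ∀ (n : ℤ), Pk n → Pk (n+1) :=
    fun n p => ⟨(stepUp n p.1 p.2).choose, (stepUp n p.1 p.2).choose_spec.1⟩
  have sUp_rel : ∀ (n : ℤ) (p : Pk n) (b : IB n), (sUp n p).1 (dB n b) = - dA (n+1) (p.1 b) :=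
    fun n p b => (stepUp n p.1 p.2).choose_spec.2 b
  let sDown : ∀ (n : ℤ), Pk (n+1) → Pk n :=
    fun n p => ⟨(stepDown n p.1 p.2).choose, (stepDown n p.1 p.2).choose_spec.1⟩
  have sDown_rel : ∀ (n : ℤ) (p : Pk (n+1)) (b : IB n),
      dA (n+1) ((sDown n p).1 b) = - p.1 (dB n b) :=
    fun n p b => (stepDown n p.1 p.2).choose_spec.2 b
  let base : Pk (-1) := ⟨l0, hINV0⟩
  let up : ∀ k : ℕ, Pk (Int.ofNat k) :=
    fun k => Nat.rec (motive := fun k => Pk (Int.ofNat k)) (sUp (-1) base)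
      (fun k ih => sUp (Int.ofNat k) ih) k
  let down : ∀ k : ℕ, Pk (Int.negSucc (k+1)) :=
    fun k => Nat.rec (motive := fun k => Pk (Int.negSucc (k+1))) (sDown (Int.negSucc 1) base)
      (fun k ih => sDown (Int.negSucc (k+2)) ih) k
  let lam : ∀ n : ℤ, IB n →ₗ[R] IA (n+1) := fun n =>
    match n with
    | Int.ofNat k => (up k).1
    | Int.negSucc 0 => l0
    | Int.negSucc (k+1) => (down k).1
  have hlamneg1 : lam (-1) = l0 := rfl
  have R1 : ∀ (n : ℤ) (b : IB n), lam (n+1) (dB n b) = - dA (n+1) (lam n b) := by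
    intro n
    cases n with
    | ofNat k =>
      intro b
      show (up (k+1)).1 (dB (Int.ofNat k) b) = - dA (Int.ofNat k + 1) ((up k).1 b)
      exact sUp_rel (Int.ofNat k) (up k) b
    | negSucc k =>
      cases k with
      | zero =>
        intro b
        show (up 0).1 (dB (Int.negSucc 0) b) = - dA (Int.negSucc 0 + 1) (l0 b)
        exact sUp_rel (-1) base b
      | succ k =>
        cases k with
        | zero =>
          intro b
          have h := sDown_rel (Int.negSucc 1) base b
          show l0 (dB (Int.negSucc 1) b) = - dA (Int.negSucc 1 + 1) ((down 0).1 b)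
          have h' : dA (Int.negSucc 1 + 1) ((down 0).1 b) = - l0 (dB (Int.negSucc 1) b) := h
          rw [h', neg_neg]
        | succ k =>
          intro b
          have h := sDown_rel (Int.negSucc (k+2)) (down k) b
          show (down k).1 (dB (Int.negSucc (k+2)) b)
              = - dA (Int.negSucc (k+2) + 1) ((down (k+1)).1 b)
          have h' : dA (Int.negSucc (k+2) + 1) ((down (k+1)).1 b)
              = - (down k).1 (dB (Int.negSucc (k+2)) b) := h
          rw [h', neg_neg]
  -- the twisted product complex
  have hddX : ∀ (n : ℤ) (w : IA n × IB n),
      ((dA (n+1) (dA n w.1 + lam n w.2) + lam (n+1) (dB n w.2), dB (n+1) (dB n w.2))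
        : IA (n+1+1) × IB (n+1+1)) = 0 := by
    intro n w
    have h1 : dB (n+1) (dB n w.2) = 0 := (hexB n _).mpr ⟨w.2, rfl⟩
    have h2 : dA (n+1) (dA n w.1) = 0 := (hexA n _).mpr ⟨w.1, rfl⟩
    refine Prod.ext_iff.mpr ⟨?_, h1⟩
    show dA (n+1) (dA n w.1 + lam n w.2) + lam (n+1) (dB n w.2) = 0
    rw [map_add, h2, zero_add, R1 n w.2, add_neg_cancel]
  refine ⟨fun n => ModuleCat.of R (IA n × IB n),
    fun n => ((dA n).comp (LinearMap.fst R (IA n) (IB n))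
        + (lam n).comp (LinearMap.snd R (IA n) (IB n))).prod
      ((dB n).comp (LinearMap.snd R (IA n) (IB n))),
    (f.comp (πA.comp (LinearMap.fst R (IA 0) (IB 0))))
      + (s.comp (LinearMap.snd R (IA 0) (IB 0))),
    ⟨?_, ?_, ?_⟩, ?_, ?_⟩
  · intro n
    exact injective_prod (hinjA n) (hinjB n)
  · intro n z
    constructor
    · intro hz
      have hz1 : dA (n+1) z.1 + lam (n+1) z.2 = 0 := congrArg Prod.fst hz
      have hz2 : dB (n+1) z.2 = 0 := congrArg Prod.snd hz
      obtain ⟨b', hb'⟩ := (hexB n z.2).mp hz2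
      have ha : dA (n+1) (z.1 - lam n b') = 0 := by
        rw [map_sub]
        have hr := R1 n b'
        rw [hb'] at hr
        have hz1' : dA (n+1) z.1 = - lam (n+1) z.2 := eq_neg_of_add_eq_zero_left hz1
        rw [hz1', hr, neg_neg, sub_self]
      obtain ⟨a', ha'⟩ := (hexA n (z.1 - lam n b')).mp ha
      refine ⟨(a', b'), ?_⟩
      show ((dA n a' + lam n b', dB n b') : IA (n+1) × IB (n+1)) = z
      refine Prod.ext_iff.mpr ⟨?_, hb'⟩
      show dA n a' + lam n b' = z.1
      rw [ha', sub_add_cancel]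
    · rintro ⟨w, rfl⟩
      exact hddX n w
  · intro W hW n
    intro (φ : W →ₗ[R] (IA (n+1) × IB (n+1)))
    constructor
    · intro hφ
      have hφw : ∀ w, ((dA (n+1) ((φ w).1) + lam (n+1) ((φ w).2), dB (n+1) ((φ w).2))
          : IA (n+1+1) × IB (n+1+1)) = 0 :=
        fun w => congrArg (fun (ψ : W →ₗ[R] (IA (n+1+1) × IB (n+1+1))) => ψ w) hφ
      have hφB : (dB (n+1)).comp ((LinearMap.snd R (IA (n+1)) (IB (n+1))).comp φ) = 0 := by
        apply LinearMap.ext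
        intro w
        exact congrArg Prod.snd (hφw w)
      obtain ⟨ψB, hψB⟩ :=
        (hhomB W hW n ((LinearMap.snd R (IA (n+1)) (IB (n+1))).comp φ)).mp hφB
      have hψBw : ∀ w, dB n (ψB w) = (φ w).2 :=
        fun w => congrArg (fun (χ : W →ₗ[R] IB (n+1)) => χ w) hψB
      have hφA : (dA (n+1)).comp ((LinearMap.fst R (IA (n+1)) (IB (n+1))).comp φ
          - (lam n).comp ψB) = 0 := by
        apply LinearMap.ext
        intro w
        show dA (n+1) ((φ w).1 - lam n (ψB w)) = 0
        rw [map_sub]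
        have h1 : dA (n+1) ((φ w).1) = - lam (n+1) ((φ w).2) :=
          eq_neg_of_add_eq_zero_left (congrArg Prod.fst (hφw w))
        have h2 : lam (n+1) (dB n (ψB w)) = - dA (n+1) (lam n (ψB w)) := R1 n (ψB w)
        rw [hψBw w] at h2
        rw [h1, h2, neg_neg, sub_self]
      obtain ⟨ψA, hψA⟩ := (hhomA W hW n ((LinearMap.fst R (IA (n+1)) (IB (n+1))).comp φ
          - (lam n).comp ψB)).mp hφA
      have hψAw : ∀ w, dA n (ψA w) = (φ w).1 - lam n (ψB w) :=
        fun w => congrArg (fun (χ : W →ₗ[R] IA (n+1)) => χ w) hψA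
      refine ⟨ψA.prod ψB, ?_⟩
      apply LinearMap.ext
      intro w
      show ((dA n (ψA w) + lam n (ψB w), dB n (ψB w)) : IA (n+1) × IB (n+1)) = φ w
      refine Prod.ext_iff.mpr ⟨?_, hψBw w⟩
      show dA n (ψA w) + lam n (ψB w) = (φ w).1
      rw [hψAw w, sub_add_cancel]
    · rintro ⟨ψ, rfl⟩
      apply LinearMap.ext
      intro w
      exact hddX n (ψ w)
  · intro x
    obtain ⟨b₀, hb₀⟩ := hπB (g x)
    have h0 : g (x - s b₀) = 0 := by rw [map_sub, hs b₀, hb₀, sub_self]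
    obtain ⟨a', ha'⟩ := hker _ h0
    obtain ⟨a₀, ha₀⟩ := hπA a'
    refine ⟨(a₀, b₀), ?_⟩
    show f (πA a₀) + s b₀ = x
    rw [ha₀, ha', sub_add_cancel]
  · intro z
    constructor
    · intro hz
      have hz' : f (πA z.1) + s z.2 = 0 := hz
      have hgz : πB z.2 = 0 := by
        have h1 : g (f (πA z.1) + s z.2) = 0 := by rw [hz', map_zero]
        rw [map_add, hgf, zero_add, hs] at h1
        exact h1
      obtain ⟨b', hb'⟩ := (hexdB z.2).mp hgz
      have h2 : f (πA z.1 + τ b') = 0 := by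
        rw [map_add, hτ b']
        show f (πA z.1) + s (dB (-1) b') = 0
        rw [hb']
        exact hz'
      have h3 : πA z.1 + τ b' = 0 := by
        apply hf
        rw [h2, map_zero]
      have h4 : πA (z.1 - lam (-1) b') = 0 := by
        rw [map_sub]
        have h5 : πA (lam (-1) b') = -τ b' := hl0 b'
        rw [h5, sub_neg_eq_add]
        exact h3
      obtain ⟨a', ha'⟩ := (hexdA _).mp h4
      refine ⟨(a', b'), ?_⟩
      show ((dA (-1) a' + lam (-1) b', dB (-1) b') : IA ((-1)+1) × IB ((-1)+1)) = z
      refine Prod.ext_iff.mpr ⟨?_, hb'⟩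
      show dA (-1) a' + lam (-1) b' = z.1
      rw [ha', sub_add_cancel]
    · rintro ⟨w, rfl⟩
      show f (πA (dA (-1) w.1 + lam (-1) w.2)) + s (dB (-1) w.2) = 0
      have h1 : πA (dA (-1) w.1) = 0 := (hexdA _).mpr ⟨w.1, rfl⟩
      rw [map_add, h1, zero_add]
      have h5 : πA (lam (-1) w.2) = -τ w.2 := hl0 w.2
      rw [h5]
      have h6 : s (dB (-1) w.2) = f (τ w.2) := (hτ w.2).symm
      rw [h6]
      show f (-τ w.2) + f (τ w.2) = 0
      rw [← map_add, neg_add_cancel, map_zero]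

/-- `ChN n X` : there is an exact sequence `0 → X → E^0 → ⋯ → E^{n-1} → G → 0` with the
`E^i` injective and `G` Gorenstein weak injective. -/
def ChN : ℕ → ModuleCat.{u} R → Prop
  | 0, X => GorensteinWeakInjective R X
  | (n+1), X => ∃ (E C : ModuleCat.{u} R) (e : X →ₗ[R] E) (q : E →ₗ[R] C),
      Module.Injective R E ∧ Function.Injective e ∧ Function.Surjective q ∧
      (∀ x, q (e x) = 0) ∧ (∀ y, q y = 0 → y ∈ Set.range e) ∧ ChN n C

lemma chN_of_equiv {X Y : ModuleCat.{u} R} (e : X ≃ₗ[R] Y) {n : ℕ} (h : ChN n X) :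
    ChN n Y := by
  cases n with
  | zero => exact gwi_of_equiv e h
  | succ n =>
    obtain ⟨E, C, m, q, hE, hm, hq, hqm, hker, hC⟩ := h
    refine ⟨E, C, m.comp e.symm.toLinearMap, q, hE, ?_, hq, fun y => hqm (e.symm y),
      fun y hy => ?_, hC⟩
    · intro a b hab
      have := hm hab
      simpa using congrArg e this
    · obtain ⟨c, hc⟩ := hker y hy
      refine ⟨e c, ?_⟩
      show m (e.symm (e c)) = y
      rw [e.symm_apply_apply]
      exact hc

/-- Every module at chain stage `n` embeds into an injective with cokernel at stage `n - 1`. -/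
lemma chN_emb {n : ℕ} {C : ModuleCat.{u} R} (h : ChN n C) :
    ∃ (E C₁ : ModuleCat.{u} R) (e : C →ₗ[R] E) (q : E →ₗ[R] C₁),
      Module.Injective R E ∧ Function.Injective e ∧ Function.Surjective q ∧
      (∀ x, q (e x) = 0) ∧ (∀ y, q y = 0 → y ∈ Set.range e) ∧ ChN (n-1) C₁ := by
  cases n with
  | zero =>
    obtain ⟨E, G', e, q, hE, he, hq, hqe, hker, hG', _⟩ := gwi_emb h
    exact ⟨E, G', e, q, hE, he, hq, hqe, hker, hG'⟩
  | succ n =>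
    obtain ⟨E, C₁, e, q, hE, he, hq, hqe, hker, hC₁⟩ := h
    exact ⟨E, C₁, e, q, hE, he, hq, hqe, hker, hC₁⟩

/-- Extensions of chain-finite modules are chain-finite. -/
lemma chainExt2 : ∀ (s : ℕ) {C D C' : ModuleCat.{u} R} {m m' : ℕ}, m + m' ≤ s →
    ∀ (i : C →ₗ[R] D) (p : D →ₗ[R] C'), Function.Injective i → Function.Surjective p →
    (∀ c, p (i c) = 0) → (∀ d, p d = 0 → d ∈ Set.range i) →
    ChN m C → ChN m' C' → ∃ k, ChN (R := R) k D := by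
  intro s
  induction s with
  | zero =>
    intro C D C' m m' hs i p hi hp hpi hker hC hC'
    obtain ⟨rfl, rfl⟩ : m = 0 ∧ m' = 0 := by omega
    exact ⟨0, gwi_extension i p hi hp hpi hker hC hC'⟩
  | succ s ih =>
    intro C D C' m m' hs i p hi hp hpi hker hC hC'
    by_cases h0 : m = 0 ∧ m' = 0
    · obtain ⟨rfl, rfl⟩ := h0
      exact ⟨0, gwi_extension i p hi hp hpi hker hC hC'⟩
    obtain ⟨E, C₁, e, q, hE, he, hq, hqe, hqker, hC₁⟩ := chN_emb hC
    obtain ⟨E', C₁', e', q', hE', he', hq', hqe', hq'ker, hC₁'⟩ := chN_emb hC'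
    -- extend e over i
    obtain ⟨u, hu⟩ := hE.out i hi e
    -- the embedding of D
    let θ : D →ₗ[R] (E × E') := u.prod (e'.comp p)
    have hθ : Function.Injective θ := by
      intro d₁ d₂ hd
      have h2 : e' (p d₁) = e' (p d₂) := congrArg Prod.snd hd
      have h1 : u d₁ = u d₂ := congrArg Prod.fst hd
      have hpd : p (d₁ - d₂) = 0 := by
        rw [map_sub]
        rw [he' h2, sub_self]
      obtain ⟨c, hc⟩ := hker _ hpd
      have : u (i c) = 0 := by rw [hc, map_sub, h1, sub_self]
      rw [hu c] at this
      have hc0 : c = 0 := he (by rw [this, map_zero])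
      have : d₁ - d₂ = 0 := by rw [← hc, hc0, map_zero]
      exact sub_eq_zero.mp this
    -- the cokernel
    let T : ModuleCat.{u} R := ModuleCat.of R ((E × E') ⧸ LinearMap.range θ)
    let mk : (E × E') →ₗ[R] T := (LinearMap.range θ).mkQ
    have hmk0 : ∀ z : E × E', mk z = 0 ↔ z ∈ LinearMap.range θ := by
      intro z
      exact Submodule.Quotient.mk_eq_zero _
    -- ι₁ : C₁ → T
    obtain ⟨ι₁, hι₁⟩ := descend q hq (mk.comp (LinearMap.inl R E E')) (fun x hx => by
      obtain ⟨c, hc⟩ := hqker x hx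
      show mk (x, 0) = 0
      rw [hmk0]
      exact ⟨i c, by
        show (u (i c), e' (p (i c))) = (x, 0)
        rw [hu c, hc, hpi c, map_zero]⟩)
    -- ρ₁ : T → C₁'
    have hρwd : ∀ z : E × E', mk z = 0 → q' z.2 = 0 := by
      intro z hz
      obtain ⟨d, hd⟩ := (hmk0 z).mp hz
      have : e' (p d) = z.2 := congrArg Prod.snd hd
      rw [← this]
      exact hqe' (p d)
    obtain ⟨ρ₁, hρ₁⟩ := descend mk (Submodule.mkQ_surjective _)
      (q'.comp (LinearMap.snd R E E')) hρwd
    -- the short exact sequence 0 → C₁ → T → C₁' → 0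
    have hι₁inj : Function.Injective ι₁ := by
      intro a b hab
      obtain ⟨x, rfl⟩ := hq a
      obtain ⟨y, rfl⟩ := hq b
      have h1 : mk ((x : E), (0 : E')) = mk (y, 0) := by
        show (mk.comp (LinearMap.inl R E E')) x = (mk.comp (LinearMap.inl R E E')) y
        rw [← hι₁ x, ← hι₁ y, hab]
      have h2 : mk ((x - y : E), (0 : E')) = 0 := by
        have : ((x - y : E), (0 : E')) = ((x, 0) : E × E') - (y, 0) := by
          exact Prod.ext_iff.mpr ⟨rfl, (sub_zero _).symm⟩
        rw [this, map_sub, h1, sub_self]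
      obtain ⟨d, hd⟩ := (hmk0 _).mp h2
      have hd2 : e' (p d) = 0 := congrArg Prod.snd hd
      have hpd : p d = 0 := he' (by rw [hd2, map_zero])
      obtain ⟨c, hc⟩ := hker d hpd
      have hd1 : u d = x - y := congrArg Prod.fst hd
      rw [← hc, hu c] at hd1
      have : q (x - y) = 0 := by rw [← hd1]; exact hqe c
      rw [map_sub] at this
      exact sub_eq_zero.mp this
    have hρ₁surj : Function.Surjective ρ₁ := by
      intro c'
      obtain ⟨y, hy⟩ := hq' c'
      exact ⟨mk (0, y), by rw [hρ₁ (0, y)]; exact hy⟩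
    have hρι : ∀ c₁, ρ₁ (ι₁ c₁) = 0 := by
      intro c₁
      obtain ⟨x, rfl⟩ := hq c₁
      have h1 : ι₁ (q x) = mk (x, 0) := hι₁ x
      rw [h1, hρ₁ (x, 0)]
      show q' 0 = 0
      rw [map_zero]
    have hρker : ∀ t, ρ₁ t = 0 → t ∈ Set.range ι₁ := by
      intro t ht
      obtain ⟨z, rfl⟩ := Submodule.mkQ_surjective _ t
      have hz : q' z.2 = 0 := by
        show (q'.comp (LinearMap.snd R E E')) z = 0
        rw [← hρ₁ z]
        exact ht
      obtain ⟨c', hc'⟩ := hq'ker z.2 hz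
      obtain ⟨d, hd⟩ := hp c'
      refine ⟨q (z.1 - u d), ?_⟩
      rw [hι₁ (z.1 - u d)]
      show mk ((z.1 - u d : E), (0 : E')) = mk z
      have : ((z.1 - u d : E), (0 : E')) = z - θ d := by
        refine Prod.ext_iff.mpr ⟨rfl, ?_⟩
        show (0 : E') = z.2 - e' (p d)
        rw [hd, hc', sub_self]
      rw [this, map_sub]
      have : mk (θ d) = 0 := (hmk0 _).mpr ⟨d, rfl⟩
      rw [this, sub_zero]
    -- conclude by induction
    have hsum : (m - 1) + (m' - 1) ≤ s := by omega
    obtain ⟨k, hk⟩ := ih hsum ι₁ ρ₁ hι₁inj hρ₁surj hρι hρker hC₁ hC₁'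
    refine ⟨k + 1, ?_⟩
    exact ⟨ModuleCat.of R (E × E'), T, θ, mk, injective_prod hE hE', hθ,
      Submodule.mkQ_surjective _, fun d => (hmk0 _).mpr ⟨d, rfl⟩,
      fun z hz => (hmk0 z).mp hz, hk⟩

/-- Chain-finiteness implies the corresponding bound on the Gorenstein weak injective
dimension. -/
lemma chN_gwidLE : ∀ (n : ℕ) (X : ModuleCat.{u} R), ChN n X → GwidLE R X n := by
  intro n
  induction n with
  | zero =>
    intro X hX
    refine ⟨fun i => Nat.casesOn i X (fun _ => ModuleCat.of R PUnit.{u+1}),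
      fun _ => 0, LinearMap.id, ⟨fun a b h => h, ?_, ?_, ?_⟩, ?_⟩
    · intro y
      constructor
      · intro _
        exact ⟨y, rfl⟩
      · intro _
        rfl
    · intro i y
      constructor
      · intro _
        exact ⟨0, Subsingleton.elim _ _⟩
      · intro _
        exact Subsingleton.elim _ _
    · intro i hi x
      cases i with
      | zero => omega
      | succ j => exact Subsingleton.elim x 0
    · intro i
      cases i with
      | zero => exact hX
      | succ j => exact gwi_of_injective _ injective_punit
  | succ n ih =>
    intro X hX
    obtain ⟨E, C, e, q, hE, he, hq, hqe, hker, hC⟩ := hX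
    obtain ⟨G, d, ε, ⟨hεinj, hex0, hexi, hzero⟩, hgwi⟩ := ih C hC
    let G' : ℕ → ModuleCat.{u} R := fun i => match i with
      | 0 => E
      | (j+1) => G j
    let d' : ∀ i, G' i →ₗ[R] G' (i+1) := fun i => match i with
      | 0 => ε.comp q
      | (j+1) => d j
    refine ⟨G', d', e, ⟨he, ?_, ?_, ?_⟩, ?_⟩
    · intro y
      constructor
      · intro hy
        have h1 : q y = 0 := hεinj (by
          show ε (q y) = ε 0
          rw [map_zero]
          exact hy)
        exact hker y h1
      · rintro ⟨c, rfl⟩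
        show ε (q (e c)) = 0
        rw [hqe c, map_zero]
    · intro i
      cases i with
      | zero =>
        intro z
        constructor
        · intro hz
          obtain ⟨c, hc⟩ := (hex0 z).mp hz
          obtain ⟨y, hy⟩ := hq c
          refine ⟨y, ?_⟩
          show ε (q y) = z
          rw [hy, hc]
        · rintro ⟨y, rfl⟩
          exact (hex0 _).mpr ⟨q y, rfl⟩
      | succ j => exact hexi j
    · intro i hi x
      cases i with
      | zero => omega
      | succ j => exact hzero j (by omega) x
    · intro i
      cases i with
      | zero => exact gwi_of_injective E hE
      | succ j => exact hgwi j

/-- A finite Gorenstein weak injective coresolution yields chain-finiteness. -/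
lemma gwidLE_chN : ∀ (k : ℕ) (X : ModuleCat.{u} R), GwidLE R X k → ∃ m, ChN (R := R) m X := by
  intro k
  induction k with
  | zero =>
    intro X hX
    obtain ⟨G, d, ε, ⟨hεinj, hex0, hexi, hzero⟩, hgwi⟩ := hX
    have hsurj : Function.Surjective ε := by
      intro y
      have h0 : d 0 y = 0 := hzero 1 (by omega) (d 0 y)
      exact (hex0 y).mp h0
    exact ⟨0, gwi_of_equiv (LinearEquiv.ofBijective ε ⟨hεinj, hsurj⟩).symm (hgwi 0)⟩
  | succ k ih =>
    intro X hX
    obtain ⟨G, d, ε, ⟨hεinj, hex0, hexi, hzero⟩, hgwi⟩ := hX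
    let C : ModuleCat.{u} R := ModuleCat.of R (G 0 ⧸ LinearMap.range ε)
    obtain ⟨εC, hεC⟩ := descend (LinearMap.range ε).mkQ (Submodule.mkQ_surjective _) (d 0)
      (fun x hx => by
        obtain ⟨c, hc⟩ := (Submodule.Quotient.mk_eq_zero _).mp hx
        rw [← hc]
        exact (hex0 _).mpr ⟨c, rfl⟩)
    have hεCinj : Function.Injective εC := by
      intro a b hab
      obtain ⟨x, rfl⟩ := Submodule.mkQ_surjective _ a
      obtain ⟨y, rfl⟩ := Submodule.mkQ_surjective _ b
      rw [hεC, hεC] at hab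
      have h1 : d 0 (x - y) = 0 := by rw [map_sub, hab, sub_self]
      obtain ⟨c, hc⟩ := (hex0 _).mp h1
      have h2 : (LinearMap.range ε).mkQ (x - y) = 0 :=
        (Submodule.Quotient.mk_eq_zero _).mpr ⟨c, hc⟩
      rw [map_sub] at h2
      exact sub_eq_zero.mp h2
    have hCk : GwidLE R C k := by
      refine ⟨fun i => G (i+1), fun i => d (i+1), εC,
        ⟨hεCinj, ?_, fun i => hexi (i+1), ?_⟩, fun i => hgwi (i+1)⟩
      · intro z
        constructor
        · intro hz
          obtain ⟨y, hy⟩ := (hexi 0 z).mp hz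
          exact ⟨(LinearMap.range ε).mkQ y, (hεC y).trans hy⟩
        · rintro ⟨y, rfl⟩
          obtain ⟨x, rfl⟩ := Submodule.mkQ_surjective _ y
          show d (0+1) (εC ((LinearMap.range ε).mkQ x)) = 0
          rw [hεC x]
          exact (hexi 0 _).mpr ⟨x, rfl⟩
      · intro i hi x
        exact hzero (i+1) (by omega) x
    obtain ⟨m, hm⟩ := ih C hCk
    obtain ⟨EG, G'', e₀, q₀, hEG, he₀, hq₀, hq₀e, hq₀ker, hG'', _⟩ := gwi_emb (hgwi 0)
    let m₀ : X →ₗ[R] EG := e₀.comp ε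
    have hm₀ : Function.Injective m₀ := fun a b hab => hεinj (he₀ hab)
    let D : ModuleCat.{u} R := ModuleCat.of R (EG ⧸ LinearMap.range m₀)
    obtain ⟨ι, hι⟩ := descend (LinearMap.range ε).mkQ (Submodule.mkQ_surjective _)
      (((LinearMap.range m₀).mkQ).comp e₀) (fun x hx => by
        obtain ⟨c, hc⟩ := (Submodule.Quotient.mk_eq_zero _).mp hx
        show (LinearMap.range m₀).mkQ (e₀ x) = 0
        refine (Submodule.Quotient.mk_eq_zero _).mpr ⟨c, ?_⟩
        show e₀ (ε c) = e₀ x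
        rw [hc])
    have hιinj : Function.Injective ι := by
      intro a b hab
      obtain ⟨x, rfl⟩ := Submodule.mkQ_surjective _ a
      obtain ⟨y, rfl⟩ := Submodule.mkQ_surjective _ b
      have h1 : (LinearMap.range m₀).mkQ (e₀ x) - (LinearMap.range m₀).mkQ (e₀ y) = 0 := by
        have hx := hι x
        have hy := hι y
        show ((LinearMap.range m₀).mkQ.comp e₀) x - ((LinearMap.range m₀).mkQ.comp e₀) y = 0
        rw [← hx, ← hy, hab, sub_self]
      rw [← map_sub, ← map_sub] at h1
      obtain ⟨c, hc⟩ := (Submodule.Quotient.mk_eq_zero _).mp h1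
      have h2 : e₀ (ε c) = e₀ (x - y) := hc
      have h3 : ε c = x - y := he₀ h2
      have h4 : (LinearMap.range ε).mkQ (x - y) = 0 :=
        (Submodule.Quotient.mk_eq_zero _).mpr ⟨c, h3⟩
      rw [map_sub] at h4
      exact sub_eq_zero.mp h4
    obtain ⟨ρ', hρ'⟩ := descend (LinearMap.range m₀).mkQ (Submodule.mkQ_surjective _) q₀
      (fun y hy => by
        obtain ⟨x, hx⟩ := (Submodule.Quotient.mk_eq_zero _).mp hy
        rw [← hx]
        show q₀ (e₀ (ε x)) = 0
        exact hq₀e (ε x))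
    have hρ'surj : Function.Surjective ρ' := by
      intro g'
      obtain ⟨y, hy⟩ := hq₀ g'
      exact ⟨(LinearMap.range m₀).mkQ y, by rw [hρ' y]; exact hy⟩
    have hρι : ∀ c, ρ' (ι c) = 0 := by
      intro c
      obtain ⟨x, rfl⟩ := Submodule.mkQ_surjective _ c
      have h1 : ι ((LinearMap.range ε).mkQ x) = (LinearMap.range m₀).mkQ (e₀ x) := hι x
      rw [h1, hρ' (e₀ x)]
      exact hq₀e x
    have hρker : ∀ t, ρ' t = 0 → t ∈ Set.range ι := by
      intro t ht
      obtain ⟨y, rfl⟩ := Submodule.mkQ_surjective _ t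
      have hy : q₀ y = 0 := by rw [← hρ' y]; exact ht
      obtain ⟨c, hc⟩ := hq₀ker y hy
      refine ⟨(LinearMap.range ε).mkQ c, ?_⟩
      rw [hι c]
      show (LinearMap.range m₀).mkQ (e₀ c) = (LinearMap.range m₀).mkQ y
      rw [hc]
    obtain ⟨kk, hkk⟩ := chainExt2 (m + 0) (C := C) (D := D) (C' := G'') (m := m) (m' := 0)
      le_rfl ι ρ' hιinj hρ'surj hρι hρker hm hG''

    refine ⟨kk + 1, ⟨EG, D, m₀, (LinearMap.range m₀).mkQ, hEG, hm₀,
      Submodule.mkQ_surjective _, fun x => (Submodule.Quotient.mk_eq_zero _).mpr ⟨x, rfl⟩,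
      fun y hy => (Submodule.Quotient.mk_eq_zero _).mp hy, hkk⟩⟩

/-- If `0 → F → Z → N → 0` is exact with `F` injective and `Z` chain-finite, then `N` is
chain-finite. -/
lemma ch_quot_inj {F Z N : ModuleCat.{u} R} (ιF : F →ₗ[R] Z) (pN : Z →ₗ[R] N)
    (hF : Module.Injective R F) (hι : Function.Injective ιF) (hp : Function.Surjective pN)
    (hpi : ∀ x, pN (ιF x) = 0) (hker : ∀ z, pN z = 0 → z ∈ Set.range ιF)
    {m : ℕ} (hZ : ChN m Z) : ∃ m', ChN (R := R) m' N := by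
  obtain ⟨E₁, Z₁, v, q₁, hE₁, hv, hq₁, hq₁v, hq₁ker, hZ₁⟩ := chN_emb hZ
  let mF : F →ₗ[R] E₁ := v.comp ιF
  have hmF : Function.Injective mF := fun a b hab => hι (hv hab)
  obtain ⟨r₁, hr₁⟩ := hF.out mF hmF LinearMap.id
  let V : ModuleCat.{u} R := ModuleCat.of R (E₁ ⧸ LinearMap.range mF)
  obtain ⟨sV, hsV⟩ := descend (LinearMap.range mF).mkQ (Submodule.mkQ_surjective _)
    (LinearMap.id - mF.comp r₁) (fun y hy => by
      obtain ⟨x, hx⟩ := (Submodule.Quotient.mk_eq_zero _).mp hy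
      show y - mF (r₁ y) = 0
      rw [← hx]
      show mF x - mF (r₁ (mF x)) = 0
      rw [hr₁ x]
      show mF x - mF x = 0
      rw [sub_self])
  have hsVsec : ∀ t, (LinearMap.range mF).mkQ (sV t) = t := by
    intro t
    obtain ⟨y, rfl⟩ := Submodule.mkQ_surjective _ t
    rw [hsV y]
    show (LinearMap.range mF).mkQ (y - mF (r₁ y)) = (LinearMap.range mF).mkQ y
    rw [map_sub]
    have h0 : (LinearMap.range mF).mkQ (mF (r₁ y)) = 0 :=
      (Submodule.Quotient.mk_eq_zero _).mpr ⟨r₁ y, rfl⟩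
    rw [h0, sub_zero]
  have hVinj : Module.Injective R (E₁ ⧸ LinearMap.range mF) := by
    constructor
    intro X Y _ _ _ _ f hf g
    obtain ⟨h, hh⟩ := hE₁.out f hf (sV.comp g)
    refine ⟨((LinearMap.range mF).mkQ).comp h, fun x => ?_⟩
    show (LinearMap.range mF).mkQ (h (f x)) = g x
    rw [hh x]
    show (LinearMap.range mF).mkQ (sV (g x)) = g x
    exact hsVsec (g x)
  obtain ⟨ιN, hιN⟩ := descend pN hp (((LinearMap.range mF).mkQ).comp v) (fun z hz => by
    obtain ⟨x, hx⟩ := hker z hz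
    show (LinearMap.range mF).mkQ (v z) = 0
    refine (Submodule.Quotient.mk_eq_zero _).mpr ⟨x, ?_⟩
    show v (ιF x) = v z
    rw [hx])
  have hιNinj : Function.Injective ιN := by
    intro a b hab
    obtain ⟨z₁, rfl⟩ := hp a
    obtain ⟨z₂, rfl⟩ := hp b
    have h1 : (LinearMap.range mF).mkQ (v z₁ - v z₂) = 0 := by
      rw [map_sub]
      show ((LinearMap.range mF).mkQ.comp v) z₁ - ((LinearMap.range mF).mkQ.comp v) z₂ = 0
      rw [← hιN z₁, ← hιN z₂, hab, sub_self]
    obtain ⟨x, hx⟩ := (Submodule.Quotient.mk_eq_zero _).mp h1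
    have h2 : v (ιF x) = v (z₁ - z₂) := by rw [map_sub]; exact hx
    have h4 : pN (z₁ - z₂) = 0 := by rw [← hv h2]; exact hpi x
    rw [map_sub] at h4
    exact sub_eq_zero.mp h4
  obtain ⟨ρV, hρV⟩ := descend (LinearMap.range mF).mkQ (Submodule.mkQ_surjective _) q₁
    (fun y hy => by
      obtain ⟨x, hx⟩ := (Submodule.Quotient.mk_eq_zero _).mp hy
      rw [← hx]
      show q₁ (v (ιF x)) = 0
      exact hq₁v (ιF x))
  have hρVsurj : Function.Surjective ρV := by
    intro z₁
    obtain ⟨y, hy⟩ := hq₁ z₁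
    exact ⟨(LinearMap.range mF).mkQ y, by rw [hρV y]; exact hy⟩
  have hρVι : ∀ nn, ρV (ιN nn) = 0 := by
    intro nn
    obtain ⟨z, rfl⟩ := hp nn
    rw [hιN z]
    show ρV ((LinearMap.range mF).mkQ (v z)) = 0
    rw [hρV (v z)]
    exact hq₁v z
  have hρVker : ∀ t, ρV t = 0 → t ∈ Set.range ιN := by
    intro t ht
    obtain ⟨y, rfl⟩ := Submodule.mkQ_surjective _ t
    have hy : q₁ y = 0 := by rw [← hρV y]; exact ht
    obtain ⟨z, hz⟩ := hq₁ker y hy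
    refine ⟨pN z, ?_⟩
    rw [hιN z]
    show (LinearMap.range mF).mkQ (v z) = (LinearMap.range mF).mkQ y
    rw [hz]
  exact ⟨(m - 1) + 1, ⟨V, Z₁, ιN, ρV, hVinj, hιNinj, hρVsurj, hρVι, hρVker, hZ₁⟩⟩

/-- If `0 → L → M → N → 0` is exact with `L` and `M` chain-finite, then so is `N`. -/
lemma ch_third_of_quot {L M N : ModuleCat.{u} R} (f : L →ₗ[R] M) (g : M →ₗ[R] N)
    (hf : Function.Injective f) (hg : Function.Surjective g) (hgf : ∀ a, g (f a) = 0)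
    (hker : ∀ x, g x = 0 → x ∈ Set.range f)
    {a b : ℕ} (hL : ChN a L) (hM : ChN b M) : ∃ m, ChN (R := R) m N := by
  obtain ⟨F, L₁, eL, qL, hF, heL, hqL, hqLe, hqLker, hL₁⟩ := chN_emb hL
  let δ : L →ₗ[R] (F × M) := eL.prod (-f)
  have hδf : ∀ l, δ l = (eL l, -(f l)) := fun l => rfl
  let Z : ModuleCat.{u} R := ModuleCat.of R ((F × M) ⧸ LinearMap.range δ)
  let mk : (F × M) →ₗ[R] Z := (LinearMap.range δ).mkQ
  have hmk0 : ∀ z : F × M, mk z = 0 ↔ z ∈ LinearMap.range δ := fun z =>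
    Submodule.Quotient.mk_eq_zero _
  -- the map M → Z
  let ιM : M →ₗ[R] Z := mk.comp (LinearMap.inr R F M)
  have hιM : Function.Injective ιM := by
    intro m₁ m₂ hab
    have h1 : mk ((0 : F), m₁ - m₂) = 0 := by
      have he : (((0 : F), m₁ - m₂) : F × M) = ((0, m₁) : F × M) - (0, m₂) :=
        Prod.ext_iff.mpr ⟨(sub_zero (0 : F)).symm, rfl⟩
      rw [he, map_sub]
      show ιM m₁ - ιM m₂ = 0
      rw [hab, sub_self]
    obtain ⟨l, hl⟩ := (hmk0 _).mp h1
    have h2 : eL l = 0 := congrArg Prod.fst hl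
    have h3 : l = 0 := heL (by rw [h2, map_zero])
    have h4 : -(f l) = m₁ - m₂ := congrArg Prod.snd hl
    rw [h3, map_zero, neg_zero] at h4
    exact sub_eq_zero.mp h4.symm
  -- the map Z → L₁
  obtain ⟨ρ₁, hρ₁⟩ := descend mk (Submodule.mkQ_surjective _)
    (qL.comp (LinearMap.fst R F M)) (fun z hz => by
      obtain ⟨l, hl⟩ := (hmk0 z).mp hz
      have h1 : eL l = z.1 := congrArg Prod.fst hl
      show qL z.1 = 0
      rw [← h1]
      exact hqLe l)
  have hρ₁surj : Function.Surjective ρ₁ := by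
    intro l₁
    obtain ⟨x, hx⟩ := hqL l₁
    exact ⟨mk (x, 0), by rw [hρ₁ (x, 0)]; exact hx⟩
  have hιMρ : ∀ m', ρ₁ (ιM m') = 0 := by
    intro m'
    show ρ₁ (mk (0, m')) = 0
    rw [hρ₁ (0, m')]
    show qL 0 = 0
    rw [map_zero]
  have hρ₁ker : ∀ t, ρ₁ t = 0 → t ∈ Set.range ιM := by
    intro t ht
    obtain ⟨z, rfl⟩ := Submodule.mkQ_surjective _ t
    have hz : qL z.1 = 0 := by
      show (qL.comp (LinearMap.fst R F M)) z = 0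
      rw [← hρ₁ z]
      exact ht
    obtain ⟨l, hl⟩ := hqLker z.1 hz
    refine ⟨z.2 + f l, ?_⟩
    show mk (0, z.2 + f l) = mk z
    have he : ((0 : F), z.2 + f l) = z - δ l := by
      refine Prod.ext_iff.mpr ⟨?_, ?_⟩
      · show (0 : F) = z.1 - eL l
        rw [hl, sub_self]
      · show z.2 + f l = z.2 - (-(f l))
        rw [sub_neg_eq_add]
    rw [he, map_sub]
    have h0 : mk (δ l) = 0 := (hmk0 _).mpr ⟨l, rfl⟩
    rw [h0, sub_zero]
  obtain ⟨kz, hkz⟩ := chainExt2 (b + (a - 1)) (C := M) (D := Z) (C' := L₁) le_rfl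
    ιM ρ₁ hιM hρ₁surj hιMρ hρ₁ker hM hL₁
  -- the map F → Z
  let ιF : F →ₗ[R] Z := mk.comp (LinearMap.inl R F M)
  have hιF : Function.Injective ιF := by
    intro f₁ f₂ hab
    have h1 : mk ((f₁ - f₂ : F), (0 : M)) = 0 := by
      have he : ((f₁ - f₂ : F), (0 : M)) = ((f₁, 0) : F × M) - (f₂, 0) :=
        Prod.ext_iff.mpr ⟨rfl, (sub_zero (0 : M)).symm⟩
      rw [he, map_sub]
      show ιF f₁ - ιF f₂ = 0
      rw [hab, sub_self]
    obtain ⟨l, hl⟩ := (hmk0 _).mp h1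
    have h2 : -(f l) = 0 := congrArg Prod.snd hl
    have h3 : l = 0 := by
      apply hf
      rw [map_zero]
      exact neg_eq_zero.mp h2
    have h4 : eL l = f₁ - f₂ := congrArg Prod.fst hl
    rw [h3, map_zero] at h4
    exact sub_eq_zero.mp h4.symm
  -- the map Z → N
  obtain ⟨ρN, hρN⟩ := descend mk (Submodule.mkQ_surjective _)
    (g.comp (LinearMap.snd R F M)) (fun z hz => by
      obtain ⟨l, hl⟩ := (hmk0 z).mp hz
      have h1 : -(f l) = z.2 := congrArg Prod.snd hl
      show g z.2 = 0
      rw [← h1, map_neg, hgf l, neg_zero])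
  have hρNsurj : Function.Surjective ρN := by
    intro n
    obtain ⟨m', hm'⟩ := hg n
    exact ⟨mk (0, m'), by rw [hρN (0, m')]; exact hm'⟩
  have hιFρ : ∀ x, ρN (ιF x) = 0 := by
    intro x
    show ρN (mk (x, 0)) = 0
    rw [hρN (x, 0)]
    show g 0 = 0
    rw [map_zero]
  have hρNker : ∀ t, ρN t = 0 → t ∈ Set.range ιF := by
    intro t ht
    obtain ⟨z, rfl⟩ := Submodule.mkQ_surjective _ t
    have hz : g z.2 = 0 := by
      show (g.comp (LinearMap.snd R F M)) z = 0
      rw [← hρN z]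
      exact ht
    obtain ⟨l, hl⟩ := hker z.2 hz
    refine ⟨z.1 + eL l, ?_⟩
    show mk (z.1 + eL l, 0) = mk z
    have he : ((z.1 + eL l : F), (0 : M)) = z + δ l := by
      refine Prod.ext_iff.mpr ⟨rfl, ?_⟩
      show (0 : M) = z.2 + -(f l)
      rw [hl, add_neg_cancel]
    rw [he, map_add]
    have h0 : mk (δ l) = 0 := (hmk0 _).mpr ⟨l, rfl⟩
    rw [h0, add_zero]
  exact ch_quot_inj ιF ρN hF hιF hρNsurj hιFρ hρNker hkz

/-- If `0 → L → M → N → 0` is exact with `M` and `N` chain-finite, then so is `L`. -/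
lemma ch_third_of_ker {L M N : ModuleCat.{u} R} (f : L →ₗ[R] M) (g : M →ₗ[R] N)
    (hf : Function.Injective f) (hg : Function.Surjective g) (hgf : ∀ a, g (f a) = 0)
    (hker : ∀ x, g x = 0 → x ∈ Set.range f)
    {b c : ℕ} (hM : ChN b M) (hN : ChN c N) : ∃ m, ChN (R := R) m L := by
  obtain ⟨E, M₁, eM, qM, hE, heM, hqM, hqMe, hqMker, hM₁⟩ := chN_emb hM
  let mL : L →ₗ[R] E := eM.comp f
  have hmL : Function.Injective mL := fun a b hab => hf (heM hab)
  let V : ModuleCat.{u} R := ModuleCat.of R (E ⧸ LinearMap.range mL)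
  let mkV : E →ₗ[R] V := (LinearMap.range mL).mkQ
  have hmk0 : ∀ y : E, mkV y = 0 ↔ y ∈ LinearMap.range mL := fun y =>
    Submodule.Quotient.mk_eq_zero _
  -- ι : N → V
  obtain ⟨ι, hι⟩ := descend g hg (mkV.comp eM) (fun m' hm' => by
    obtain ⟨l, hl⟩ := hker m' hm'
    show mkV (eM m') = 0
    refine (hmk0 _).mpr ⟨l, ?_⟩
    show eM (f l) = eM m'
    rw [hl])
  have hιinj : Function.Injective ι := by
    intro n₁ n₂ hab
    obtain ⟨m₁, rfl⟩ := hg n₁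
    obtain ⟨m₂, rfl⟩ := hg n₂
    have h1 : mkV (eM (m₁ - m₂)) = 0 := by
      rw [map_sub, map_sub]
      show (mkV.comp eM) m₁ - (mkV.comp eM) m₂ = 0
      rw [← hι m₁, ← hι m₂, hab, sub_self]
    obtain ⟨l, hl⟩ := (hmk0 _).mp h1
    have h2 : eM (f l) = eM (m₁ - m₂) := hl
    have h3 : g (m₁ - m₂) = 0 := by rw [← heM h2]; exact hgf l
    rw [map_sub] at h3
    exact sub_eq_zero.mp h3
  -- ρ : V → M₁
  obtain ⟨ρ, hρ⟩ := descend mkV (Submodule.mkQ_surjective _) qM (fun y hy => by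
    obtain ⟨l, hl⟩ := (hmk0 y).mp hy
    rw [← hl]
    show qM (eM (f l)) = 0
    exact hqMe (f l))
  have hρsurj : Function.Surjective ρ := by
    intro m₁
    obtain ⟨y, hy⟩ := hqM m₁
    exact ⟨mkV y, by rw [hρ y]; exact hy⟩
  have hρι : ∀ n, ρ (ι n) = 0 := by
    intro n
    obtain ⟨m', rfl⟩ := hg n
    rw [hι m']
    show ρ (mkV (eM m')) = 0
    rw [hρ (eM m')]
    exact hqMe m'
  have hρker : ∀ t, ρ t = 0 → t ∈ Set.range ι := by
    intro t ht
    obtain ⟨y, rfl⟩ := Submodule.mkQ_surjective _ t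
    have hy : qM y = 0 := by rw [← hρ y]; exact ht
    obtain ⟨m', hm'⟩ := hqMker y hy
    refine ⟨g m', ?_⟩
    rw [hι m']
    show mkV (eM m') = mkV y
    rw [hm']
  obtain ⟨kv, hkv⟩ := chainExt2 (c + (b - 1)) (C := N) (D := V) (C' := M₁) le_rfl
    ι ρ hιinj hρsurj hρι hρker hN hM₁
  exact ⟨kv + 1, ⟨E, V, mL, mkV, hE, hmL, Submodule.mkQ_surjective _,
    fun x => (hmk0 _).mpr ⟨x, rfl⟩, fun y hy => (hmk0 y).mp hy, hkv⟩⟩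

end GWHelp


/-- In a short exact sequence `0 → L → M → N → 0`, if any two of `L`, `M`, `N` have
finite Gorenstein weak injective dimension then so does the third. -/
theorem gwid_two_of_three (L M N : ModuleCat.{u} R)
    (f : L →ₗ[R] M) (g : M →ₗ[R] N) (hse : ShortExactSeq R L M N f g) :
    ((∃ k : ℕ, GwidLE R L k) → (∃ k : ℕ, GwidLE R M k) → ∃ k : ℕ, GwidLE R N k) ∧
    ((∃ k : ℕ, GwidLE R L k) → (∃ k : ℕ, GwidLE R N k) → ∃ k : ℕ, GwidLE R M k) ∧
    ((∃ k : ℕ, GwidLE R M k) → (∃ k : ℕ, GwidLE R N k) → ∃ k : ℕ, GwidLE R L k) := by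
  obtain ⟨hfinj, hgsurj, hexact⟩ := hse
  have hgf : ∀ a, g (f a) = 0 := fun a => (hexact (f a)).mpr ⟨a, rfl⟩
  have hker : ∀ x, g x = 0 → x ∈ Set.range f := fun x hx => (hexact x).mp hx
  refine ⟨?_, ?_, ?_⟩
  · rintro ⟨kL, hL⟩ ⟨kM, hM⟩
    obtain ⟨a, ha⟩ := GWHelp.gwidLE_chN kL L hL
    obtain ⟨b, hb⟩ := GWHelp.gwidLE_chN kM M hM
    obtain ⟨m, hm⟩ := GWHelp.ch_third_of_quot f g hfinj hgsurj hgf hker ha hb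
    exact ⟨m, GWHelp.chN_gwidLE m N hm⟩
  · rintro ⟨kL, hL⟩ ⟨kN, hN⟩
    obtain ⟨a, ha⟩ := GWHelp.gwidLE_chN kL L hL
    obtain ⟨c, hc⟩ := GWHelp.gwidLE_chN kN N hN
    obtain ⟨m, hm⟩ := GWHelp.chainExt2 (a + c) le_rfl f g hfinj hgsurj hgf hker ha hc
    exact ⟨m, GWHelp.chN_gwidLE m M hm⟩
  · rintro ⟨kM, hM⟩ ⟨kN, hN⟩
    obtain ⟨b, hb⟩ := GWHelp.gwidLE_chN kM M hM
    obtain ⟨c, hc⟩ := GWHelp.gwidLE_chN kN N hN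
    obtain ⟨m, hm⟩ := GWHelp.ch_third_of_ker f g hfinj hgsurj hgf hker hb hc
    exact ⟨m, GWHelp.chN_gwidLE m L hm⟩
end

section
/- For any R-module M, Gwid_R(M) ≤ id_R(M); and if the weak injective dimension of M is finite then Gwid_R(M) = id_R(M). -/
open CategoryTheory

universe u

variable (R : Type u) [Ring R]

namespace GwidAux


variable {R : Type u} [Ring R]

/-! ### Elementary factorization lemmas -/

theorem fact_surj {A B C : Type u} [AddCommGroup A] [Module R A] [AddCommGroup B] [Module R B]
    [AddCommGroup C] [Module R C] (u : A →ₗ[R] B) (v : A →ₗ[R] C)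
    (hu : Function.Surjective u) (h : LinearMap.ker u ≤ LinearMap.ker v) :
    ∃ w : B →ₗ[R] C, w.comp u = v := by
  refine ⟨((LinearMap.ker u).liftQ v h).comp
    (LinearMap.quotKerEquivOfSurjective u hu).symm.toLinearMap, ?_⟩
  ext a
  have h1 : (LinearMap.quotKerEquivOfSurjective u hu).symm (u a)
      = Submodule.Quotient.mk a := by
    rw [LinearEquiv.symm_apply_eq]
    rfl
  simp only [LinearMap.comp_apply, LinearEquiv.coe_coe, h1]
  rfl

theorem fact_inj {A B C : Type u} [AddCommGroup A] [Module R A] [AddCommGroup B] [Module R B]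
    [AddCommGroup C] [Module R C] (v : A →ₗ[R] B) (i : C →ₗ[R] B)
    (hi : Function.Injective i) (h : ∀ x, v x ∈ LinearMap.range i) :
    ∃ w : A →ₗ[R] C, i.comp w = v := by
  refine ⟨(LinearEquiv.ofInjective i hi).symm.toLinearMap.comp
    (v.codRestrict (LinearMap.range i) h), ?_⟩
  ext a
  have h1 : i ((LinearEquiv.ofInjective i hi).symm ⟨v a, h a⟩) = v a := by
    have := (LinearEquiv.ofInjective i hi).apply_symm_apply ⟨v a, h a⟩
    have h2 := congrArg Subtype.val this
    rwa [LinearEquiv.ofInjective_apply] at h2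
  simpa using h1

theorem inj_fact {A B T : Type u} [AddCommGroup A] [Module R A] [AddCommGroup B] [Module R B]
    [AddCommGroup T] [Module R T] (hT : Module.Injective R T)
    (u : A →ₗ[R] B) (v : A →ₗ[R] T) (h : LinearMap.ker u ≤ LinearMap.ker v) :
    ∃ w : B →ₗ[R] T, w.comp u = v := by
  obtain ⟨w₀, hw₀⟩ := fact_surj u.rangeRestrict v u.surjective_rangeRestrict
    (by intro x hx; exact h (by simpa using congrArg Subtype.val (show u.rangeRestrict x = 0 from hx)))
  obtain ⟨w, hw⟩ := hT.out (LinearMap.range u).subtype (Submodule.injective_subtype _) w₀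
  refine ⟨w, ?_⟩
  ext a
  have : w (u a) = w₀ (u.rangeRestrict a) := hw (u.rangeRestrict a)
  rw [LinearMap.comp_apply, this, ← hw₀]
  rfl

theorem injective_of_retract {E X : Type u} [AddCommGroup E] [Module R E]
    [AddCommGroup X] [Module R X]
    (hE : Module.Injective R E) (ι : X →ₗ[R] E) (ρ : E →ₗ[R] X)
    (hρ : ρ.comp ι = LinearMap.id) :
    Module.Injective R X := by
  refine ⟨fun {A B} _ _ _ _ f hf g => ?_⟩
  obtain ⟨h, hh⟩ := hE.out f hf (ι.comp g)
  refine ⟨ρ.comp h, fun x => ?_⟩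
  have : ρ (ι (g x)) = g x := congrArg (fun m => m (g x)) hρ
  simp only [LinearMap.comp_apply, hh x, LinearMap.comp_apply] at *
  exact this

theorem punit_injective : Module.Injective R PUnit.{u+1} :=
  ⟨fun {X Y} _ _ _ _ f _ g => ⟨0, fun x => Subsingleton.elim _ _⟩⟩

/-- From a section of `p` in a short exact sequence, get a retraction of `ι`. -/
theorem retraction_of_section {A B C : Type u} [AddCommGroup A] [Module R A]
    [AddCommGroup B] [Module R B] [AddCommGroup C] [Module R C]
    (ι : A →ₗ[R] B) (p : B →ₗ[R] C) (hι : Function.Injective ι)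
    (hex : Function.Exact ι p) (s : C →ₗ[R] B) (hs : p.comp s = LinearMap.id) :
    ∃ ρ : B →ₗ[R] A, ρ.comp ι = LinearMap.id := by
  obtain ⟨ρ, hρ⟩ := fact_inj (LinearMap.id - s.comp p) ι hι (by
    intro x
    have : p (x - s (p x)) = 0 := by
      have : p (s (p x)) = p x := congrArg (fun m => m (p x)) hs
      simp [this]
    simpa using (hex _).1 this)
  refine ⟨ρ, ?_⟩
  ext a
  have h1 : ι (ρ (ι a)) = ι a - s (p (ι a)) := congrArg (fun m => m (ι a)) hρ
  have h2 : p (ι a) = 0 := (hex _).2 ⟨a, rfl⟩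
  rw [h2] at h1
  simp only [map_zero, sub_zero] at h1
  simpa using hι h1



variable {R : Type u} [Ring R]

/-! ### Concrete projective resolutions -/

structure CRes (R : Type u) [Ring R] (N : ModuleCat.{u} R) where
  F : ℕ → ModuleCat.{u} R
  d : ∀ n, F (n + 1) →ₗ[R] F n
  ε : F 0 →ₗ[R] N
  proj : ∀ n, Module.Projective R (F n)
  surj : Function.Surjective ε
  ex0 : Function.Exact (d 0) ε
  exs : ∀ n, Function.Exact (d (n + 1)) (d n)

namespace CRes

variable {N : ModuleCat.{u} R} (res : CRes R N)

theorem eps_d : res.ε.comp (res.d 0) = 0 := by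
  ext x
  exact (res.ex0 _).2 ⟨x, rfl⟩

theorem d_d (n : ℕ) : (res.d n).comp (res.d (n + 1)) = 0 := by
  ext x
  exact (res.exs n _).2 ⟨x, rfl⟩

end CRes

/-- the canonical free surjection onto a module -/
noncomputable def canSurj (A : Type u) [AddCommGroup A] [Module R A] : (A →₀ R) →ₗ[R] A :=
  Finsupp.linearCombination R id

theorem canSurj_surjective (A : Type u) [AddCommGroup A] [Module R A] :
    Function.Surjective (canSurj (R := R) A) := fun a =>
  ⟨Finsupp.single a 1, by simp [canSurj]⟩

/-- tower of syzygies for the canonical free resolution -/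
noncomputable def cfS (N : ModuleCat.{u} R) : ℕ → ModuleCat.{u} R
  | 0 => N
  | n + 1 => ModuleCat.of R (LinearMap.ker (canSurj (R := R) (cfS N n)))

/-- the canonical free resolution of an arbitrary module -/
noncomputable def cfRes (N : ModuleCat.{u} R) : CRes R N where
  F n := ModuleCat.of R ((cfS N n) →₀ R)
  d n := (LinearMap.ker (canSurj (R := R) (cfS N n))).subtype.comp
    (canSurj (R := R) (cfS N (n + 1)))
  ε := canSurj (R := R) (cfS N 0)
  proj n := inferInstanceAs (Module.Projective R ((cfS N n) →₀ R))
  surj := canSurj_surjective (R := R) (cfS N 0)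
  ex0 := by
    intro x
    constructor
    · intro hx
      obtain ⟨y, hy⟩ := canSurj_surjective (R := R) (cfS N 1) ⟨x, hx⟩
      exact ⟨y, congrArg Subtype.val hy⟩
    · rintro ⟨y, rfl⟩
      exact (canSurj (R := R) (cfS N 1) y).2
  exs n := by
    intro x
    constructor
    · intro hx
      have hx' : canSurj (R := R) (cfS N (n + 1)) x = 0 := Subtype.ext hx
      obtain ⟨y, hy⟩ := canSurj_surjective (R := R) (cfS N (n + 2)) ⟨x, hx'⟩
      exact ⟨y, congrArg Subtype.val hy⟩
    · rintro ⟨y, rfl⟩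
      exact congrArg Subtype.val (canSurj (R := R) (cfS N (n + 2)) y).2

/-! ### The bridge between `ExtVanish` and concrete resolutions -/

theorem subsingleton_iff_isZero {A : Type*} [Ring A] (X : ModuleCat A) :
    Subsingleton X ↔ Limits.IsZero X := by
  constructor
  · intro h
    exact ModuleCat.isZero_of_subsingleton X
  · intro h
    refine ⟨fun a b => ?_⟩
    have h0 : (𝟙 X : X ⟶ X) = 0 := h.eq_of_src _ _
    have ha : a = 0 := by
      have : (𝟙 X : X ⟶ X) a = (0 : X ⟶ X) a := by rw [h0]
      simpa using this
    have hb : b = 0 := by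
      have : (𝟙 X : X ⟶ X) b = (0 : X ⟶ X) b := by rw [h0]
      simpa using this
    rw [ha, hb]

variable {N : ModuleCat.{u} R}

/-- the chain complex associated with a concrete resolution -/
noncomputable def CRes.cplx (res : CRes R N) : ChainComplex (ModuleCat.{u} R) ℕ :=
  ChainComplex.of res.F (fun n => ModuleCat.ofHom (res.d n))
    (fun n => ModuleCat.hom_ext (by
      rw [ModuleCat.hom_comp, ModuleCat.hom_ofHom, ModuleCat.hom_ofHom, ModuleCat.hom_zero]
      exact res.d_d n))

theorem CRes.cplx_d (res : CRes R N) (n : ℕ) :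
    res.cplx.d (n + 1) n = ModuleCat.ofHom (res.d n) :=
  by unfold CRes.cplx; exact ChainComplex.of_d res.F (fun n => ModuleCat.ofHom (res.d n)) n

/-- the projective resolution associated with a concrete resolution -/
noncomputable def CRes.toPR (res : CRes R N) : ProjectiveResolution N where
  complex := res.cplx
  projective n := (IsProjective.iff_projective (res.F n)).1 (res.proj n)
  π := (ChainComplex.toSingle₀Equiv _ _).symm
    ⟨ModuleCat.ofHom res.ε, by
      have : res.cplx.d 1 0 = ModuleCat.ofHom (res.d 0) := res.cplx_d 0
      rw [this]
      exact ModuleCat.hom_ext res.eps_d⟩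
  quasiIso := ⟨fun n => by
    cases n with
    | zero =>
      rw [ChainComplex.quasiIsoAt₀_iff, ShortComplex.quasiIso_iff_of_zeros' _ rfl rfl rfl]
      have hz : res.ε.comp (res.d 0) = 0 := res.eps_d
      refine (ShortComplex.exact_and_epi_g_iff_of_iso
        (S₂ := ShortComplex.mk (X₁ := res.F 1) (X₂ := res.F 0) (X₃ := N)
          (ModuleCat.ofHom (res.d 0)) (ModuleCat.ofHom res.ε) (ModuleCat.hom_ext (by
            rw [ModuleCat.hom_comp, ModuleCat.hom_ofHom, ModuleCat.hom_ofHom, ModuleCat.hom_zero]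
            exact hz))) ?_).2 ⟨?_, ?_⟩
      · refine ShortComplex.isoMk (Iso.refl _) (Iso.refl _) (Iso.refl _) ?_ ?_
        · dsimp
          exact (Category.id_comp _).trans ((res.cplx_d 0).symm.trans (Category.comp_id _).symm)
        · dsimp
          refine (Category.id_comp _).trans (Eq.trans (Eq.symm ?_) (Category.comp_id _).symm)
          exact ChainComplex.toSingle₀Equiv_symm_apply_f_zero (C := res.cplx) (X := N) _
            (by
              rw [res.cplx_d]
              exact ModuleCat.hom_ext res.eps_d)
      · rw [ShortComplex.moduleCat_exact_iff]
        intro x hx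
        exact (res.ex0 x).1 hx
      · rw [ModuleCat.epi_iff_surjective]
        exact res.surj
    | succ n =>
      rw [quasiIsoAt_iff_exactAt' _ _ (ChainComplex.exactAt_succ_single_obj _ _)]
      rw [HomologicalComplex.exactAt_iff' _ (n + 2) (n + 1) n (by simp) (by simp)]
      rw [ShortComplex.moduleCat_exact_iff]
      intro (x : res.F (n + 1)) hx
      have hg : res.cplx.d (n + 1) n x = 0 := hx
      rw [res.cplx_d] at hg
      obtain ⟨y, hy⟩ := (res.exs n x).1 hg
      refine ⟨y, ?_⟩
      show res.cplx.d (n + 2) (n + 1) y = x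
      rw [res.cplx_d]
      exact hy⟩

set_option maxHeartbeats 1000000 in
/-- Vanishing of `Ext` is equivalent to a concrete lifting property along any
concrete projective resolution. -/
theorem extVanish_iff (res : CRes R N) (M : ModuleCat.{u} R) (s : ℕ) :
    ExtVanish R (s + 1) N M ↔
      ∀ f : res.F (s + 1) →ₗ[R] M, f.comp (res.d (s + 1)) = 0 →
        ∃ g : res.F s →ₗ[R] M, g.comp (res.d s) = f := by
  have iso := res.toPR.isoExt (R := ℤ) (s + 1) M
  have ecplx : res.toPR.complex = res.cplx := rfl
  rw [ecplx] at iso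
  have h1 : ExtVanish R (s + 1) N M ↔
      Limits.IsZero ((res.cplx.linearYonedaObj ℤ M).homology (s + 1)) := by
    unfold ExtVanish
    rw [subsingleton_iff_isZero]
    constructor
    · intro h
      exact h.of_iso iso.symm
    · intro h
      exact h.of_iso iso
  rw [h1, ← HomologicalComplex.exactAt_iff_isZero_homology,
    HomologicalComplex.exactAt_iff' _ s (s + 1) (s + 2) (by simp) (by simp),
    ShortComplex.moduleCat_exact_iff]
  have hd1 : ∀ (h : res.F (s + 1) →ₗ[R] M),
      ((res.cplx.linearYonedaObj ℤ M).d (s + 1) (s + 2)) (ModuleCat.ofHom h)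
        = ModuleCat.ofHom (h.comp (res.d (s + 1))) := by
    intro h
    rw [ChainComplex.linearYonedaObj_d]
    show res.cplx.d (s + 2) (s + 1) ≫ ModuleCat.ofHom h = _
    rw [res.cplx_d]
    rfl
  have hd0 : ∀ (g : res.F s →ₗ[R] M),
      ((res.cplx.linearYonedaObj ℤ M).d s (s + 1)) (ModuleCat.ofHom g)
        = ModuleCat.ofHom (g.comp (res.d s)) := by
    intro g
    rw [ChainComplex.linearYonedaObj_d]
    show res.cplx.d (s + 1) s ≫ ModuleCat.ofHom g = _
    rw [res.cplx_d]
    rfl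
  constructor
  · intro h f hf
    obtain ⟨g, hg⟩ := h (ModuleCat.ofHom f)
      (show ((res.cplx.linearYonedaObj ℤ M).d (s + 1) (s + 2)) (ModuleCat.ofHom f) = 0 by
        rw [hd1, hf]; rfl)
    let g' : res.F s ⟶ M := g
    have hg' : ((res.cplx.linearYonedaObj ℤ M).d s (s + 1)) (ModuleCat.ofHom g'.hom)
        = ModuleCat.ofHom f := hg
    rw [hd0] at hg'
    exact ⟨g'.hom, congrArg ModuleCat.Hom.hom hg'⟩
  · intro h f hf
    let f' : res.F (s + 1) ⟶ M := f
    have hf0 : ((res.cplx.linearYonedaObj ℤ M).d (s + 1) (s + 2))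
        (ModuleCat.ofHom f'.hom) = 0 := hf
    rw [hd1] at hf0
    obtain ⟨g, hg⟩ := h f'.hom (congrArg ModuleCat.Hom.hom hf0)
    exact ⟨ModuleCat.ofHom g, show ((res.cplx.linearYonedaObj ℤ M).d s (s + 1))
        (ModuleCat.ofHom g) = f by
      rw [hd0, hg]; rfl⟩

/-! ### Diagram chases -/

theorem comp_d_zero_iff {N : ModuleCat.{u} R} (res : CRes R N) {M : ModuleCat.{u} R}
    (j : ℕ) (f : ↥(res.F (j + 1)) →ₗ[R] ↥M) :
    f.comp (res.d (j + 1)) = 0 ↔ ∀ x, f (res.d (j + 1) x) = 0 := by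
  constructor
  · intro h x
    exact DFunLike.congr_fun h x
  · intro h
    ext x
    exact h x

/-- Injective modules are weak injective. -/
theorem weakInjective_of_injective {X : ModuleCat.{u} R} (hX : Module.Injective R X) :
    WeakInjective R X := by
  intro N hN
  obtain ⟨F, d, ε, _, hproj, hsurj, hex0, hexs⟩ := hN
  let res : CRes R N := ⟨F, d, ε, hproj, hsurj, hex0, hexs⟩
  refine (extVanish_iff res X 0).2 ?_
  intro f hf
  refine inj_fact hX (res.d 0) f ?_
  intro x hx
  obtain ⟨y, hy⟩ := (hexs 0 x).1 hx
  have : f x = f (d 1 y) := by rw [hy]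
  rw [LinearMap.mem_ker, this]
  exact DFunLike.congr_fun hf y

/-- Vanishing of Ext transfers along an isomorphism in the second variable. -/
theorem extVanish_congr {N A B : ModuleCat.{u} R} (e : ↥A ≃ₗ[R] ↥B) (s : ℕ)
    (h : ExtVanish R (s + 1) N A) : ExtVanish R (s + 1) N B := by
  let res := cfRes N
  rw [extVanish_iff res] at h ⊢
  intro f hf
  obtain ⟨g, hg⟩ := h ((e.symm : ↥B →ₗ[R] ↥A).comp f) (by
    rw [LinearMap.comp_assoc, hf, LinearMap.comp_zero])
  refine ⟨(e : ↥A →ₗ[R] ↥B).comp g, ?_⟩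
  rw [LinearMap.comp_assoc, hg, ← LinearMap.comp_assoc]
  ext x
  simp

/-- Dimension-shift (downward) along a short exact sequence with injective middle
term : `Ext^{s+2}(N, A) = 0 → Ext^{s+1}(N, C) = 0`. -/
theorem shift_down {A B C : ModuleCat.{u} R} {ι : ↥A →ₗ[R] ↥B} {p : ↥B →ₗ[R] ↥C}
    (hι : Function.Injective ι) (hp : Function.Surjective p) (hex : Function.Exact ι p)
    (hB : Module.Injective R ↥B) (N : ModuleCat.{u} R) (s : ℕ)
    (h : ExtVanish R (s + 2) N A) : ExtVanish R (s + 1) N C := by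
  let res := cfRes N
  rw [extVanish_iff res] at h ⊢
  intro f hf
  -- lift f to ft : F (s+1) → B
  obtain ⟨ft, hft⟩ := Module.projective_lifting_property (h := res.proj (s + 1)) p f hp
  -- ft ∘ d (s+1) lands in range ι
  obtain ⟨h₀, hh₀⟩ := fact_inj (ft.comp (res.d (s + 1))) ι hι (by
    intro x
    refine (hex _).1 ?_
    have e1 : p (ft ((res.d (s + 1)) x)) = f ((res.d (s + 1)) x) :=
      DFunLike.congr_fun hft _
    have e2 : f ((res.d (s + 1)) x) = 0 := DFunLike.congr_fun hf x
    rw [LinearMap.comp_apply, e1, e2])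
  -- h₀ : F (s+2) → A is a cocycle
  have hcoc : h₀.comp (res.d (s + 2)) = 0 := by
    ext x
    apply hι
    have e1 : ι (h₀ ((res.d (s + 2)) x)) = ft ((res.d (s + 1)) ((res.d (s + 2)) x)) :=
      DFunLike.congr_fun hh₀ _
    have e2 : (res.d (s + 1)) ((res.d (s + 2)) x) = 0 :=
      DFunLike.congr_fun (res.d_d (s + 1)) x
    rw [LinearMap.comp_apply, e1, e2]
    simp
  obtain ⟨q, hq⟩ := h h₀ hcoc
  -- ft - ι ∘ q factors through d s since B is injective
  obtain ⟨w, hw⟩ := inj_fact hB (res.d s) (ft - ι.comp q) (by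
    intro x hx
    obtain ⟨y, hy⟩ := (res.exs s x).1 hx
    rw [LinearMap.mem_ker, ← hy]
    have e1 : ι (h₀ y) = ft ((res.d (s + 1)) y) := by
      simpa using DFunLike.congr_fun hh₀ y
    have e2 : q ((res.d (s + 1)) y) = h₀ y := DFunLike.congr_fun hq y
    simp only [LinearMap.sub_apply, LinearMap.comp_apply, e2, ← e1, sub_self])
  refine ⟨p.comp w, ?_⟩
  ext x
  have e1 : w ((res.d s) x) = ft x - ι (q x) := DFunLike.congr_fun hw x
  have e2 : p (ι (q x)) = 0 := (hex _).2 ⟨q x, rfl⟩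
  have e3 : p (ft x) = f x := DFunLike.congr_fun hft x
  simp only [LinearMap.comp_apply, e1, map_sub, e2, e3, sub_zero]

/-- Dimension-shift (upward) along a short exact sequence with injective middle
term : `Ext^{s+1}(N, C) = 0 → Ext^{s+2}(N, A) = 0`. -/
theorem shift_up {A B C : ModuleCat.{u} R} {ι : ↥A →ₗ[R] ↥B} {p : ↥B →ₗ[R] ↥C}
    (hι : Function.Injective ι) (hp : Function.Surjective p) (hex : Function.Exact ι p)
    (hB : Module.Injective R ↥B) (N : ModuleCat.{u} R) (s : ℕ)
    (h : ExtVanish R (s + 1) N C) : ExtVanish R (s + 2) N A := by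
  let res := cfRes N
  rw [extVanish_iff res] at h ⊢
  intro f hf
  -- extend ι ∘ f through d (s+1) using injectivity of B
  obtain ⟨h₁, hh₁⟩ := inj_fact hB (res.d (s + 1)) (ι.comp f) (by
    intro x hx
    obtain ⟨y, hy⟩ := (res.exs (s + 1) x).1 hx
    rw [LinearMap.mem_ker, LinearMap.comp_apply, ← hy]
    have : f ((res.d (s + 2)) y) = 0 := DFunLike.congr_fun hf y
    rw [this, map_zero])
  -- p ∘ h₁ is a cocycle in degree s+1
  have hcoc : (p.comp h₁).comp (res.d (s + 1)) = 0 := by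
    ext x
    have h1 : h₁ ((res.d (s + 1)) x) = ι (f x) := DFunLike.congr_fun hh₁ x
    have h2 : p (ι (f x)) = 0 := (hex _).2 ⟨f x, rfl⟩
    simp only [LinearMap.comp_apply, h1, h2]
    rfl
  obtain ⟨w, hw⟩ := h (p.comp h₁) hcoc
  -- lift w along p
  obtain ⟨wt, hwt⟩ := Module.projective_lifting_property (h := res.proj s) p w hp
  -- h₁ - wt ∘ d s lands in range ι
  obtain ⟨g, hg⟩ := fact_inj (h₁ - wt.comp (res.d s)) ι hι (by
    intro x
    refine (hex _).1 ?_
    have h1 : p (h₁ x) = w ((res.d s) x) := by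
      have := DFunLike.congr_fun hw x
      simpa using this.symm
    have h2 : p (wt ((res.d s) x)) = w ((res.d s) x) := DFunLike.congr_fun hwt _
    simp only [LinearMap.sub_apply, LinearMap.comp_apply, map_sub, h1, h2, sub_self])
  refine ⟨g, ?_⟩
  ext x
  apply hι
  have h1 : ι (g ((res.d (s + 1)) x)) = h₁ ((res.d (s + 1)) x)
      - wt ((res.d s) ((res.d (s + 1)) x)) := by
    have := DFunLike.congr_fun hg ((res.d (s + 1)) x)
    simpa using this
  have h2 : (res.d s) ((res.d (s + 1)) x) = 0 := DFunLike.congr_fun (res.d_d s) x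
  have h3 : h₁ ((res.d (s + 1)) x) = ι (f x) := DFunLike.congr_fun hh₁ x
  rw [LinearMap.comp_apply, h1, h2, map_zero, sub_zero, h3]

/-- If `Ext^1(C, A) = 0` then any short exact sequence `0 → A → B → C → 0` splits
(there is a section of `p`). -/
theorem section_of_extVanish {A B C : ModuleCat.{u} R} {ι : ↥A →ₗ[R] ↥B} {p : ↥B →ₗ[R] ↥C}
    (hι : Function.Injective ι) (hp : Function.Surjective p) (hex : Function.Exact ι p)
    (h : ExtVanish R 1 C A) : ∃ sct : ↥C →ₗ[R] ↥B, p.comp sct = LinearMap.id := by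
  let res := cfRes C
  have h' := (extVanish_iff res A 0).1 h
  -- lift ε along p
  obtain ⟨uu, huu⟩ := Module.projective_lifting_property (h := res.proj 0) p res.ε hp
  -- uu ∘ d 0 lands in range ι
  obtain ⟨f, hf⟩ := fact_inj (uu.comp (res.d 0)) ι hι (by
    intro x
    refine (hex _).1 ?_
    have h1 : p (uu ((res.d 0) x)) = res.ε ((res.d 0) x) := DFunLike.congr_fun huu _
    have h2 : res.ε ((res.d 0) x) = 0 := DFunLike.congr_fun res.eps_d x
    rw [LinearMap.comp_apply, h1, h2])
  have hcoc : f.comp (res.d 1) = 0 := by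
    ext x
    apply hι
    have h1 : ι (f ((res.d 1) x)) = uu ((res.d 0) ((res.d 1) x)) := DFunLike.congr_fun hf _
    have h2 : (res.d 0) ((res.d 1) x) = 0 := DFunLike.congr_fun (res.d_d 0) x
    rw [LinearMap.comp_apply, h1, h2]
    simp
  obtain ⟨g, hg⟩ := h' f hcoc
  -- uu - ι ∘ g kills ker ε, hence factors through ε
  obtain ⟨sct, hsct⟩ := fact_surj res.ε (uu - ι.comp g) res.surj (by
    intro x hx
    obtain ⟨y, hy⟩ := (res.ex0 x).1 hx
    rw [LinearMap.mem_ker, ← hy]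
    have h1 : g ((res.d 0) y) = f y := DFunLike.congr_fun hg y
    have h2 : ι (f y) = uu ((res.d 0) y) := DFunLike.congr_fun hf y
    simp only [LinearMap.sub_apply, LinearMap.comp_apply, h1, h2, sub_self])
  refine ⟨sct, ?_⟩
  ext c
  obtain ⟨x, rfl⟩ := res.surj c
  have h1 : sct (res.ε x) = uu x - ι (g x) := DFunLike.congr_fun hsct x
  have h2 : p (ι (g x)) = 0 := (hex _).2 ⟨g x, rfl⟩
  have h3 : p (uu x) = res.ε x := DFunLike.congr_fun huu x
  simp only [LinearMap.comp_apply, h1, map_sub, h2, h3, sub_zero, LinearMap.id_apply]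

/-- The chase along `0 → M → G₀ → D → 0` with `Ext^{s+2}(X, G₀) = 0` and
`Ext^{s+1}(X, D) = 0`. -/
theorem d_chase {M G0 D : ModuleCat.{u} R} {ι : ↥M →ₗ[R] ↥G0} {p : ↥G0 →ₗ[R] ↥D}
    (hι : Function.Injective ι) (hp : Function.Surjective p) (hex : Function.Exact ι p)
    (X : ModuleCat.{u} R) (s : ℕ)
    (h1 : ExtVanish R (s + 2) X G0) (h2 : ExtVanish R (s + 1) X D) :
    ExtVanish R (s + 2) X M := by
  let res := cfRes X
  rw [extVanish_iff res] at h1 h2 ⊢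
  intro f hf
  -- ι ∘ f is a cocycle with values in G0
  obtain ⟨hh, hhh⟩ := h1 (ι.comp f) (by
    rw [LinearMap.comp_assoc, hf, LinearMap.comp_zero])
  -- p ∘ hh is a cocycle in degree s+1
  obtain ⟨q, hq⟩ := h2 (p.comp hh) (by
    ext x
    have e1 : hh ((res.d (s + 1)) x) = ι (f x) := DFunLike.congr_fun hhh x
    have e2 : p (ι (f x)) = 0 := (hex _).2 ⟨f x, rfl⟩
    simp only [LinearMap.comp_apply, e1, e2]
    rfl)
  -- lift q along p
  obtain ⟨qt, hqt⟩ := Module.projective_lifting_property (h := res.proj s) p q hp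
  -- hh - qt ∘ d s lands in range ι
  obtain ⟨g, hg⟩ := fact_inj (hh - qt.comp (res.d s)) ι hι (by
    intro x
    refine (hex _).1 ?_
    have e1 : p (hh x) = q ((res.d s) x) := by
      have := DFunLike.congr_fun hq x
      simpa using this.symm
    have e2 : p (qt ((res.d s) x)) = q ((res.d s) x) := DFunLike.congr_fun hqt _
    simp only [LinearMap.sub_apply, LinearMap.comp_apply, map_sub, e1, e2, sub_self])
  refine ⟨g, ?_⟩
  ext x
  apply hι
  have e1 : ι (g ((res.d (s + 1)) x)) = hh ((res.d (s + 1)) x)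
      - qt ((res.d s) ((res.d (s + 1)) x)) := by
    have := DFunLike.congr_fun hg ((res.d (s + 1)) x)
    simpa using this
  have e2 : (res.d s) ((res.d (s + 1)) x) = 0 := DFunLike.congr_fun (res.d_d s) x
  have e3 : hh ((res.d (s + 1)) x) = ι (f x) := DFunLike.congr_fun hhh x
  rw [LinearMap.comp_apply, e1, e2, map_zero, sub_zero, e3]

/-! ### Gorenstein weak injective modules -/

theorem gwi_extVanish {G : ModuleCat.{u} R} (hG : GorensteinWeakInjective R G)
    {W : ModuleCat.{u} R} (hW : WeakInjective R W) (s : ℕ) :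
    ExtVanish R (s + 1) W G := by
  obtain ⟨T, dT, π, ⟨hinj, hexact, hhom⟩, hπs, hπex⟩ := hG
  let K : ℤ → ModuleCat.{u} R := fun t => ModuleCat.of R (LinearMap.range (dT t))
  let ι : ∀ t : ℤ, ↥(K t) →ₗ[R] ↥(T (t + 1)) := fun t => (LinearMap.range (dT t)).subtype
  let q : ∀ t : ℤ, ↥(T (t + 1)) →ₗ[R] ↥(K (t + 1)) := fun t => (dT (t + 1)).rangeRestrict
  have hιinj : ∀ t, Function.Injective (ι t) := fun t => Submodule.injective_subtype _
  have hqsurj : ∀ t, Function.Surjective (q t) := fun t => LinearMap.surjective_rangeRestrict _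
  have hdd : ∀ (t : ℤ) (x : ↥(T t)), dT (t + 1) (dT t x) = 0 := fun t x =>
    (hexact t _).2 ⟨x, rfl⟩
  have hqex : ∀ t, Function.Exact (ι t) (q t) := by
    intro t y
    constructor
    · intro hy
      have hy' : dT (t + 1) y = 0 := congrArg Subtype.val hy
      obtain ⟨z, hz⟩ := (hexact t y).1 hy'
      exact ⟨⟨dT t z, ⟨z, rfl⟩⟩, hz⟩
    · rintro ⟨⟨a, ha⟩, rfl⟩
      apply Subtype.ext
      obtain ⟨z, hz⟩ := ha
      show dT (t + 1) a = (0 : ↥(T (t + 1 + 1)))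
      rw [← hz]
      exact hdd t z
  -- Step 1 : Ext^1(W, K t) = 0 for every t
  have step1 : ∀ t : ℤ, ExtVanish R 1 W (K t) := by
    intro t
    let res := cfRes W
    refine (extVanish_iff res (K t) 0).2 ?_
    intro f hf
    obtain ⟨u', hu'⟩ := inj_fact (hinj (t + 1)) (res.d 0) ((ι t).comp f) (by
      intro x hx
      obtain ⟨y, hy⟩ := (res.exs 0 x).1 hx
      rw [LinearMap.mem_ker, LinearMap.comp_apply, ← hy]
      have : f ((res.d 1) y) = 0 := DFunLike.congr_fun hf y
      rw [this, map_zero])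
    obtain ⟨v, hv⟩ := fact_surj res.ε ((dT (t + 1)).comp u') res.surj (by
      intro x hx
      obtain ⟨y, hy⟩ := (res.ex0 x).1 hx
      rw [LinearMap.mem_ker, LinearMap.comp_apply, ← hy]
      have e1 : u' ((res.d 0) y) = ι t (f y) := DFunLike.congr_fun hu' y
      rw [e1]
      obtain ⟨z, hz⟩ := (f y).2
      have : (ι t) (f y) = dT t z := hz.symm
      rw [this]
      exact hdd t z)
    have hv2 : (dT (t + 1 + 1)).comp v = 0 := by
      ext x
      obtain ⟨y, rfl⟩ := res.surj x
      have e1 : v (res.ε y) = dT (t + 1) (u' y) := DFunLike.congr_fun hv y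
      rw [LinearMap.comp_apply, e1]
      simpa using hdd (t + 1) (u' y)
    obtain ⟨sw, hsw⟩ := (hhom W hW (t + 1) v).1 hv2
    obtain ⟨g, hg⟩ := fact_inj (u' - sw.comp res.ε) (ι t) (hιinj t) (by
      intro x
      have hmem : dT (t + 1) ((u' - sw.comp res.ε) x) = 0 := by
        have e1 : dT (t + 1) (sw (res.ε x)) = v (res.ε x) := by
          have := DFunLike.congr_fun hsw (res.ε x)
          simpa using this
        have e2 : v (res.ε x) = dT (t + 1) (u' x) := DFunLike.congr_fun hv x
        simp only [LinearMap.sub_apply, LinearMap.comp_apply, map_sub, e1, e2, sub_self]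
      obtain ⟨z, hz⟩ := (hexact t _).1 hmem
      show (u' - sw.comp res.ε) x ∈ LinearMap.range (ι t)
      rw [show LinearMap.range (ι t) = LinearMap.range (dT t) from Submodule.range_subtype _]
      exact ⟨z, hz⟩)
    refine ⟨g, ?_⟩
    ext y
    show ι t ((g ∘ₗ res.d 0) y) = ι t (f y)
    have e1 : ι t (g ((res.d 0) y)) = (u' - sw.comp res.ε) ((res.d 0) y) :=
      DFunLike.congr_fun hg _
    have e2 : res.ε ((res.d 0) y) = 0 := DFunLike.congr_fun res.eps_d y
    have e3 : u' ((res.d 0) y) = ι t (f y) := DFunLike.congr_fun hu' y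
    simp only [LinearMap.comp_apply, e1, LinearMap.sub_apply, LinearMap.comp_apply, e2,
      map_zero, sub_zero, e3]
  -- Step 2 : Ext^{s+1}(W, K t) = 0 for every s, t
  have step2 : ∀ (s' : ℕ) (t : ℤ), ExtVanish R (s' + 1) W (K t) := by
    intro s'
    induction s' with
    | zero => exact step1
    | succ s' ih =>
      intro t
      exact shift_up (hιinj t) (hqsurj t) (hqex t) (hinj (t + 1)) W s' (ih (t + 1))
  -- Step 3 : G ≅ K 0
  have hkq : LinearMap.ker π ≤ LinearMap.ker (dT 0) := by
    intro x hx
    obtain ⟨y, hy⟩ := (hπex x).1 hx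
    rw [LinearMap.mem_ker, ← hy]
    exact hdd (-1) y
  obtain ⟨φ, hφ⟩ := fact_surj π (dT 0) hπs hkq
  let φ' : ↥G →ₗ[R] ↥(K 0) := φ.codRestrict (LinearMap.range (dT 0)) (by
    intro c
    obtain ⟨x, rfl⟩ := hπs c
    exact ⟨x, (DFunLike.congr_fun hφ x).symm⟩)
  have hφ'bij : Function.Bijective φ' := by
    constructor
    · intro a b hab
      obtain ⟨x, rfl⟩ := hπs a
      obtain ⟨y, rfl⟩ := hπs b
      have h1 : φ (π x) = φ (π y) := congrArg Subtype.val hab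
      have h2 : dT 0 x = dT 0 y := by
        have ex : φ (π x) = dT 0 x := DFunLike.congr_fun hφ x
        have ey : φ (π y) = dT 0 y := DFunLike.congr_fun hφ y
        rw [← ex, ← ey, h1]
      have h3 : x - y ∈ LinearMap.ker (dT 0) := by
        rw [LinearMap.mem_ker, map_sub, h2, sub_self]
      obtain ⟨z, hz⟩ := (hexact (-1) (x - y)).1 h3
      have : π (x - y) = 0 := by
        rw [← hz]
        exact (hπex _).2 ⟨z, rfl⟩
      rw [map_sub, sub_eq_zero] at this
      exact this
    · rintro ⟨c, hc⟩
      obtain ⟨y, hy⟩ := hc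
      refine ⟨π y, Subtype.ext ?_⟩
      show φ (π y) = c
      rw [show φ (π y) = dT 0 y from DFunLike.congr_fun hφ y]
      exact hy
  exact extVanish_congr (LinearEquiv.ofBijective φ' hφ'bij).symm s (step2 s 0)

/-- Higher Ext vanishing from `WidLE` via syzygies of super finitely presented modules. -/
theorem widLE_higher {M : ModuleCat.{u} R} {k : ℕ} (hk : WidLE R M k) :
    ∀ (t : ℕ) (N : ModuleCat.{u} R), SuperFinitelyPresented R N →
      ExtVanish R (k + 1 + t) N M := by
  intro t
  induction t with
  | zero => exact fun N hN => hk N hN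
  | succ t ih =>
    intro N hN
    obtain ⟨F, d, ε, hfin, hproj, hsurj, hex0, hexs⟩ := hN
    let res : CRes R N := ⟨F, d, ε, hproj, hsurj, hex0, hexs⟩
    let Ω : ModuleCat.{u} R := ModuleCat.of R (LinearMap.range (d 0))
    have hΩex : Function.Exact (d 1) ((d 0).rangeRestrict) := by
      intro y
      constructor
      · intro hy
        have : d 0 y = 0 := by
          have := congrArg Subtype.val hy
          simpa using this
        exact (hexs 0 y).1 this
      · intro hy
        apply Subtype.ext
        obtain ⟨z, hz⟩ := hy
        have : d 0 y = 0 := (hexs 0 y).2 ⟨z, hz⟩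
        simpa using this
    have hΩ : SuperFinitelyPresented R Ω :=
      ⟨fun n => F (n + 1), fun n => d (n + 1), (d 0).rangeRestrict,
        fun n => hfin (n + 1), fun n => hproj (n + 1),
        LinearMap.surjective_rangeRestrict _, hΩex, fun n => hexs (n + 1)⟩
    let res' : CRes R Ω := ⟨fun n => F (n + 1), fun n => d (n + 1), (d 0).rangeRestrict,
      fun n => hproj (n + 1), LinearMap.surjective_rangeRestrict _, hΩex,
      fun n => hexs (n + 1)⟩
    have h1 : ExtVanish R (k + 1 + t) Ω M := ih Ω hΩ
    have e1 : k + 1 + t = (k + t) + 1 := by omega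
    rw [e1] at h1
    have h2 := (extVanish_iff res' M (k + t)).1 h1
    have e2 : k + 1 + (t + 1) = (k + t + 1) + 1 := by omega
    rw [e2]
    exact (extVanish_iff res M (k + t + 1)).2 h2

theorem widLE_ge {M : ModuleCat.{u} R} {k : ℕ} (hk : WidLE R M k) {s : ℕ} (hs : k + 1 ≤ s)
    {N : ModuleCat.{u} R} (hN : SuperFinitelyPresented R N) : ExtVanish R s N M := by
  obtain ⟨t, rfl⟩ : ∃ t, s = k + 1 + t := ⟨s - (k + 1), by omega⟩
  exact widLE_higher hk t N hN

/-- Ext vanishing against modules of finite Gorenstein weak injective dimension. -/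
theorem gwidLE_extVanish : ∀ (n : ℕ) (M : ModuleCat.{u} R), GwidLE R M n →
    ∀ (W : ModuleCat.{u} R), WeakInjective R W → ∀ s, n + 1 ≤ s → ExtVanish R s W M := by
  intro n
  induction n with
  | zero =>
    intro M hM W hW s hs
    obtain ⟨G, d, ε, ⟨hεinj, hex0, hexs, hvan⟩, hGWI⟩ := hM
    have hεsurj : Function.Surjective ε := by
      intro y
      have : d 0 y = 0 := hvan 1 (by omega) _
      exact (hex0 _).1 this
    obtain ⟨t, rfl⟩ : ∃ t, s = t + 1 := ⟨s - 1, by omega⟩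
    exact extVanish_congr (LinearEquiv.ofBijective ε ⟨hεinj, hεsurj⟩).symm t
      (gwi_extVanish (hGWI 0) hW t)
  | succ n ih =>
    intro M hM W hW s hs
    obtain ⟨G, d, ε, ⟨hεinj, hex0, hexs, hvan⟩, hGWI⟩ := hM
    let D : ModuleCat.{u} R := ModuleCat.of R (LinearMap.range (d 0))
    have hDex : Function.Exact ((LinearMap.range (d 0)).subtype) (d 1) := by
      intro y
      constructor
      · intro hy
        obtain ⟨z, hz⟩ := (hexs 0 y).1 hy
        exact ⟨⟨d 0 z, ⟨z, rfl⟩⟩, hz⟩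
      · rintro ⟨⟨a, ha⟩, rfl⟩
        obtain ⟨z, hz⟩ := ha
        have : d 1 a = 0 := (hexs 0 a).2 ⟨z, hz⟩
        simpa using this
    have hD : GwidLE R D n :=
      ⟨fun i => G (i + 1), fun i => d (i + 1), (LinearMap.range (d 0)).subtype,
        ⟨Submodule.injective_subtype _, hDex, fun i => hexs (i + 1),
          fun i hi => hvan (i + 1) (by omega)⟩,
        fun i => hGWI (i + 1)⟩
    have hMex : Function.Exact ε ((d 0).rangeRestrict) := by
      intro y
      constructor
      · intro hy
        have : d 0 y = 0 := by
          have := congrArg Subtype.val hy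
          simpa using this
        exact (hex0 y).1 this
      · intro hy
        apply Subtype.ext
        obtain ⟨z, hz⟩ := hy
        have : d 0 y = 0 := (hex0 y).2 ⟨z, hz⟩
        simpa using this
    obtain ⟨s', rfl⟩ : ∃ s', s = s' + 2 := ⟨s - 2, by omega⟩
    exact d_chase hεinj (LinearMap.surjective_rangeRestrict _) hMex W s'
      (gwi_extVanish (hGWI 0) hW (s' + 1)) (ih D hD W hW (s' + 1) (by omega))

/-! ### The injective cosyzygy tower -/

/-- cosyzygy tower of a module -/
noncomputable def Cc (M : ModuleCat.{u} R) : ℕ → ModuleCat.{u} R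
  | 0 => M
  | i + 1 => ModuleCat.of R
      (↥(Injective.under (Cc M i)) ⧸
        LinearMap.range (Injective.ι (Cc M i)).hom)

noncomputable def Ee (M : ModuleCat.{u} R) (i : ℕ) : ModuleCat.{u} R :=
  Injective.under (Cc M i)

noncomputable def emb (M : ModuleCat.{u} R) (i : ℕ) : ↥(Cc M i) →ₗ[R] ↥(Ee M i) :=
  (Injective.ι (Cc M i)).hom

noncomputable def cpr (M : ModuleCat.{u} R) (i : ℕ) : ↥(Ee M i) →ₗ[R] ↥(Cc M (i + 1)) :=
  (LinearMap.range (emb M i)).mkQ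

theorem emb_injective (M : ModuleCat.{u} R) (i : ℕ) : Function.Injective (emb M i) :=
  (ModuleCat.mono_iff_injective (Injective.ι (Cc M i))).1 inferInstance

theorem Ee_injective (M : ModuleCat.{u} R) (i : ℕ) : Module.Injective R ↥(Ee M i) := by
  have h : CategoryTheory.Injective (ModuleCat.of R ↥(Ee M i)) := by
    show CategoryTheory.Injective (Injective.under (Cc M i))
    infer_instance
  exact Module.injective_module_of_injective_object (inj := h) _ _

theorem cpr_surjective (M : ModuleCat.{u} R) (i : ℕ) : Function.Surjective (cpr M i) :=
  Submodule.mkQ_surjective _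

theorem cc_exact (M : ModuleCat.{u} R) (i : ℕ) : Function.Exact (emb M i) (cpr M i) := by
  rw [LinearMap.exact_iff]
  exact Submodule.ker_mkQ _

/-- shifting Ext-vanishing down the tower -/
theorem cc_shift (M N : ModuleCat.{u} R) (i : ℕ) : ∀ (t s : ℕ),
    ExtVanish R (s + 1 + t) N (Cc M i) → ExtVanish R (s + 1) N (Cc M (i + t)) := by
  intro t
  induction t generalizing i with
  | zero => exact fun s h => h
  | succ t ih =>
    intro s h
    have h' : ExtVanish R (s + 1 + 1 + t) N (Cc M i) := by
      rw [show s + 1 + 1 + t = s + 1 + (t + 1) from by omega]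
      exact h
    have h2 : ExtVanish R (s + 1 + 1) N (Cc M (i + t)) := ih i (s + 1) h'
    have h3 : ExtVanish R (s + 1) N (Cc M (i + t + 1)) :=
      shift_down (emb_injective M (i + t)) (cpr_surjective M (i + t)) (cc_exact M (i + t))
        (Ee_injective M (i + t)) N s h2
    exact h3

/-- cosyzygies far enough out are weak injective -/
theorem cc_weakInjective_of_ge {M : ModuleCat.{u} R} {k : ℕ} (hk : WidLE R M k)
    (j : ℕ) (hj : k ≤ j) : WeakInjective R (Cc M j) := by
  intro N hN
  have h0 : ExtVanish R (0 + 1 + j) N (Cc M 0) := by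
    have : ExtVanish R (0 + 1 + j) N M := widLE_ge hk (by omega) hN
    exact this
  have := cc_shift M N 0 j 0 h0
  simp only [Nat.zero_add] at this
  exact this

/-- from a weak injective `(j+1)`-st cosyzygy, the `j`-th cosyzygy is injective -/
theorem cc_injective_of_next {M : ModuleCat.{u} R} {n : ℕ} (hgw : GwidLE R M n)
    (j : ℕ) (hj : n ≤ j) (hwi : WeakInjective R (Cc M (j + 1))) :
    Module.Injective R ↥(Cc M j) := by
  have h1 : ExtVanish R (j + 1) (Cc M (j + 1)) M :=
    gwidLE_extVanish n M hgw _ hwi (j + 1) (by omega)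
  have h2 : ExtVanish R 1 (Cc M (j + 1)) (Cc M j) := by
    have h0 : ExtVanish R (0 + 1 + j) (Cc M (j + 1)) (Cc M 0) := by
      rw [show 0 + 1 + j = j + 1 from by omega]
      exact h1
    have := cc_shift M (Cc M (j + 1)) 0 j 0 h0
    simp only [Nat.zero_add] at this
    exact this
  obtain ⟨sct, hsct⟩ := section_of_extVanish (emb_injective M j) (cpr_surjective M j)
    (cc_exact M j) h2
  obtain ⟨ρ, hρ⟩ := retraction_of_section (emb M j) (cpr M j) (emb_injective M j)
    (cc_exact M j) sct hsct
  exact injective_of_retract (Ee_injective M j) (emb M j) ρ hρ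

theorem cc_weak_all {M : ModuleCat.{u} R} {k n : ℕ} (hk : WidLE R M k) (hgw : GwidLE R M n) :
    ∀ (m j : ℕ), n + 1 ≤ j → k ≤ j + m → WeakInjective R (Cc M j) := by
  intro m
  induction m with
  | zero => exact fun j _ hkj => cc_weakInjective_of_ge hk j (by omega)
  | succ m ih =>
    intro j hj hkj
    by_cases h : k ≤ j + m
    · exact ih j hj h
    · have hnext : WeakInjective R (Cc M (j + 1)) := ih (j + 1) (by omega) (by omega)
      exact weakInjective_of_injective (cc_injective_of_next hgw j (by omega) hnext)

theorem cc_injective_n {M : ModuleCat.{u} R} {k n : ℕ} (hk : WidLE R M k)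
    (hgw : GwidLE R M n) : Module.Injective R ↥(Cc M n) :=
  cc_injective_of_next hgw n le_rfl (cc_weak_all hk hgw k (n + 1) le_rfl (by omega))

/-! ### Building injective coresolutions -/

theorem punit_subsingleton : Subsingleton ↥(ModuleCat.of R PUnit.{u+1}) :=
  inferInstanceAs (Subsingleton PUnit)

theorem punit_eq (x y : ↥(ModuleCat.of R PUnit.{u+1})) : x = y :=
  punit_subsingleton.elim x y

noncomputable def consMod (E : ModuleCat.{u} R) (G' : ℕ → ModuleCat.{u} R) :
    ℕ → ModuleCat.{u} R
  | 0 => E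
  | i + 1 => G' i

noncomputable def consMap (E : ModuleCat.{u} R) (G' : ℕ → ModuleCat.{u} R)
    (d0 : ↥E →ₗ[R] ↥(G' 0)) (d' : ∀ i, ↥(G' i) →ₗ[R] ↥(G' (i + 1))) :
    ∀ i, ↥(consMod E G' i) →ₗ[R] ↥(consMod E G' (i + 1))
  | 0 => d0
  | i + 1 => d' i

theorem idLE_zero {M : ModuleCat.{u} R} (hM : Module.Injective R ↥M) : IdLE R M 0 := by
  refine ⟨consMod M (fun _ => ModuleCat.of R PUnit.{u+1}),
    consMap M _ 0 (fun _ => 0), LinearMap.id, ⟨fun a b h => h, ?_, ?_, ?_⟩, ?_⟩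
  · intro y
    constructor
    · intro _
      exact ⟨y, rfl⟩
    · intro _
      rfl
  · intro i y
    constructor
    · intro _
      cases i with
      | zero => exact ⟨0, punit_eq _ _⟩
      | succ j => exact ⟨0, punit_eq _ _⟩
    · intro _
      cases i with
      | zero => rfl
      | succ j => exact punit_eq _ _
  · intro i hi x
    cases i with
    | zero => omega
    | succ j => exact punit_eq _ _
  · intro i
    cases i with
    | zero => exact hM
    | succ j => exact punit_injective

theorem idLE_succ {M E C' : ModuleCat.{u} R} (ι : ↥M →ₗ[R] ↥E) (p : ↥E →ₗ[R] ↥C')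
    (hι : Function.Injective ι) (hp : Function.Surjective p) (hex : Function.Exact ι p)
    (hE : Module.Injective R ↥E) {n : ℕ} (hC : IdLE R C' n) : IdLE R M (n + 1) := by
  obtain ⟨G', d', ε', ⟨hι', hex0', hexs', hvan'⟩, hinj'⟩ := hC
  refine ⟨consMod E G', consMap E G' (ε'.comp p) d', ι, ⟨hι, ?_, ?_, ?_⟩, ?_⟩
  · intro y
    constructor
    · intro hy
      have : p y = 0 := hι' (by rw [map_zero]; exact hy)
      exact (hex y).1 this
    · intro hy
      have : p y = 0 := (hex y).2 hy
      show ε' (p y) = 0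
      rw [this, map_zero]
  · intro i
    cases i with
    | zero =>
      intro y
      constructor
      · intro hy
        obtain ⟨z, hz⟩ := (hex0' y).1 hy
        obtain ⟨w, hw⟩ := hp z
        exact ⟨w, by show ε' (p w) = y; rw [hw, hz]⟩
      · rintro ⟨z, rfl⟩
        exact (hex0' _).2 ⟨p z, rfl⟩
    | succ j => exact hexs' j
  · intro i hi
    cases i with
    | zero => omega
    | succ j => exact hvan' j (by omega)
  · intro i
    cases i with
    | zero => exact hE
    | succ j => exact hinj' j

theorem idLE_tower {M : ModuleCat.{u} R} : ∀ (t j : ℕ),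
    Module.Injective R ↥(Cc M (j + t)) → IdLE R (Cc M j) t := by
  intro t
  induction t with
  | zero => exact fun j h => idLE_zero h
  | succ t ih =>
    intro j h
    have h' : Module.Injective R ↥(Cc M (j + 1 + t)) := by
      rw [show j + 1 + t = j + (t + 1) from by omega]
      exact h
    exact idLE_succ (emb M j) (cpr M j) (emb_injective M j) (cpr_surjective M j)
      (cc_exact M j) (Ee_injective M j) (ih (j + 1) h')

/-- The main comparison : finite weak injective dimension plus a Gorenstein weak
injective coresolution of length `n` give an injective coresolution of length `n`. -/
theorem idLE_of_gwidLE {M : ModuleCat.{u} R} {k n : ℕ} (hk : WidLE R M k)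
    (hgw : GwidLE R M n) : IdLE R M n := by
  have hinj : Module.Injective R ↥(Cc M n) := cc_injective_n hk hgw
  have h0 : Module.Injective R ↥(Cc M (0 + n)) := by
    rw [Nat.zero_add]
    exact hinj
  exact idLE_tower n 0 h0

/-! ### Injective modules are Gorenstein weak injective -/

theorem gwi_of_injective {G : ModuleCat.{u} R} (hG : Module.Injective R ↥G) :
    GorensteinWeakInjective R G := by
  refine ⟨fun _ => G, fun t => if t % 2 = 0 then (LinearMap.id : ↥G →ₗ[R] ↥G) else 0,
    LinearMap.id, ⟨fun _ => hG, ?_, ?_⟩, Function.surjective_id, ?_⟩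
  · intro t y
    by_cases h : t % 2 = 0
    · have h1 : (t + 1) % 2 ≠ 0 := by omega
      simp only [if_pos h, if_neg h1]
      constructor
      · intro _
        exact ⟨y, rfl⟩
      · intro _
        rfl
    · have h1 : (t + 1) % 2 = 0 := by omega
      simp only [if_neg h, if_pos h1]
      constructor
      · intro hy
        exact ⟨y, hy.symm⟩
      · rintro ⟨x, rfl⟩
        rfl
  · intro W _ t g
    by_cases h : t % 2 = 0
    · have h1 : (t + 1) % 2 ≠ 0 := by omega
      simp only [if_pos h, if_neg h1]
      constructor
      · intro _
        exact ⟨g, LinearMap.id_comp g⟩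
      · intro _
        exact LinearMap.zero_comp g
    · have h1 : (t + 1) % 2 = 0 := by omega
      simp only [if_neg h, if_pos h1]
      constructor
      · intro hy
        rw [LinearMap.id_comp] at hy
        exact ⟨g, by rw [hy]; exact (LinearMap.zero_comp g).symm⟩
      · rintro ⟨x, rfl⟩
        simp
  · have h1 : (-1 : ℤ) % 2 ≠ 0 := by decide
    simp only [if_neg h1]
    intro y
    constructor
    · intro hy
      exact ⟨y, hy.symm⟩
    · rintro ⟨x, rfl⟩
      rfl

theorem gwidLE_of_idLE {M : ModuleCat.{u} R} {n : ℕ} (h : IdLE R M n) : GwidLE R M n := by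
  obtain ⟨G, d, ε, hc, hinj⟩ := h
  exact ⟨G, d, ε, hc, fun i => gwi_of_injective (hinj i)⟩


end GwidAux

/-- `Gwid_R M ≤ id_R M`, with equality when the weak injective dimension of `M` is
finite. -/
theorem gwid_le_idim (M : ModuleCat.{u} R) :
    Gwid R M ≤ Idim R M ∧ ((∃ k : ℕ, WidLE R M k) → Gwid R M = Idim R M) := by
  have hsub : {c : ℕ∞ | ∃ n : ℕ, c = n ∧ IdLE R M n}
      ⊆ {c : ℕ∞ | ∃ n : ℕ, c = n ∧ GwidLE R M n} := by
    rintro c ⟨n, rfl, h⟩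
    exact ⟨n, rfl, GwidAux.gwidLE_of_idLE h⟩
  constructor
  · exact sInf_le_sInf hsub
  · rintro ⟨k, hk⟩
    refine le_antisymm (sInf_le_sInf hsub) ?_
    refine le_sInf ?_
    rintro c ⟨n, rfl, hgw⟩
    exact sInf_le ⟨n, rfl, GwidAux.idLE_of_gwidLE hk hgw⟩
end
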